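/- arXiv:0809.3553 — 5 statements merged into one kernel-verified Lean document; each statement's English description precedes it below -/
import Mathlib

section
/- Let ν > 0, let g : ℝ → ℝ be a smooth function with g(0) = g'(0) = 0, and set β = (2π)²ν. Define, for (x,t) ∈ ℝ³ × [0,∞), u₁(x,t) = e^{−βt}·2π(sin(2π(x₂+g(t))) + cos(2π(x₃+g(t)))) − g'(t), u₂(x,t) = e^{−βt}·2π(sin(2π(x₃+g(t))) + cos(2π(x₁+g(t)))) − g'(t), u₃(x,t) = e^{−βt}·2π(sin(2π(x₁+g(t))) + cos(2π(x₂+g(t)))) − g'(t), and p(x,t) = −e^{−2βt}(2π)²[sin(2π(x₁+g(t)))cos(2π(x₂+g(t))) + sin(2π(x₂+g(t)))cos(2π(x₃+g(t))) + sin(2π(x₃+g(t)))cos(2π(x₁+g(t)))] + g''(t)(x₁+x₂+x₃). Then u and p are smooth, u satisfies ∂u_i/∂t + Σ_{j=1}³ u_j ∂u_i/∂x_j = ν Δu_i − ∂p/∂x_i for all x ∈ ℝ³, t ≥ 0, and i = 1,2,3 (zero external force), div u(·,t) = 0 for all t ≥ 0, and u(x,0) = u⁰(x) where u⁰₁(x)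 = 2π sin(2πx₂) + 2π cos(2πx₃), u⁰₂(x) = 2π sin(2πx₃) + 2π cos(2πx₁), u⁰₃(x) = 2π sin(2πx₁) + 2π cos(2πx₂). -/
open Real

/-- Partial derivative of `f : ℝ³ → ℝ` in the `j`-th coordinate direction. -/
noncomputable def pd (f : (Fin 3 → ℝ) → ℝ) (j : Fin 3) (x : Fin 3 → ℝ) : ℝ :=
  fderiv ℝ f x (Pi.single j 1)

/-- Spatial Laplacian of `f : ℝ³ → ℝ`. -/
noncomputable def lap (f : (Fin 3 → ℝ) → ℝ) (x : Fin 3 → ℝ) : ℝ :=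
  ∑ j : Fin 3, pd (pd f j) j x

/-- One-sided (within `[0,∞)`) time derivative. -/
noncomputable def td (f : ℝ → ℝ) (t : ℝ) : ℝ :=
  derivWithin f (Set.Ici 0) t

lemma pd_two (φ ψ : ℝ → ℝ) (φ' ψ' : ℝ) (d : ℝ) (k1 k2 j : Fin 3) (x : Fin 3 → ℝ)
    (hφ : HasDerivAt φ φ' (x k1)) (hψ : HasDerivAt ψ ψ' (x k2)) :
    pd (fun y => φ (y k1) + ψ (y k2) - d) j x
      = φ' * (Pi.single j (1:ℝ) : Fin 3 → ℝ) k1 + ψ' * (Pi.single j (1:ℝ) : Fin 3 → ℝ) k2 := by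
  have H1 : HasFDerivAt (fun y : Fin 3 → ℝ => φ (y k1))
      (φ' • (ContinuousLinearMap.proj (R := ℝ) (φ := fun _ : Fin 3 => ℝ) k1)) x :=
    by exact hφ.comp_hasFDerivAt x (hasFDerivAt_apply k1 x)
  have H2 : HasFDerivAt (fun y : Fin 3 → ℝ => ψ (y k2))
      (ψ' • (ContinuousLinearMap.proj (R := ℝ) (φ := fun _ : Fin 3 => ℝ) k2)) x :=
    by exact hψ.comp_hasFDerivAt x (hasFDerivAt_apply k2 x)
  have H := (H1.add H2).sub_const d
  rw [pd]; erw [H.fderiv]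
  simp

lemma lap_two (φ ψ φd ψd : ℝ → ℝ) (φ'' ψ'' : ℝ) (d : ℝ) (k1 k2 : Fin 3) (x : Fin 3 → ℝ)
    (hφ : ∀ s, HasDerivAt φ (φd s) s) (hψ : ∀ s, HasDerivAt ψ (ψd s) s)
    (hφ2 : HasDerivAt φd φ'' (x k1)) (hψ2 : HasDerivAt ψd ψ'' (x k2)) :
    lap (fun y => φ (y k1) + ψ (y k2) - d) x = φ'' + ψ'' := by
  have h2 : ∀ j : Fin 3, pd (pd (fun y => φ (y k1) + ψ (y k2) - d) j) j x
      = φ'' * (Pi.single j (1:ℝ) : Fin 3 → ℝ) k1 * (Pi.single j (1:ℝ) : Fin 3 → ℝ) k1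
        + ψ'' * (Pi.single j (1:ℝ) : Fin 3 → ℝ) k2 * (Pi.single j (1:ℝ) : Fin 3 → ℝ) k2 := by
    intro j
    have hfun : pd (fun y => φ (y k1) + ψ (y k2) - d) j
        = fun y => φd (y k1) * (Pi.single j (1:ℝ) : Fin 3 → ℝ) k1
            + ψd (y k2) * (Pi.single j (1:ℝ) : Fin 3 → ℝ) k2 - 0 := by
      funext y
      rw [sub_zero]
      exact pd_two φ ψ _ _ d k1 k2 j y (hφ (y k1)) (hψ (y k2))
    rw [hfun]
    have := pd_two (fun s => φd s * (Pi.single j (1:ℝ) : Fin 3 → ℝ) k1)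
      (fun s => ψd s * (Pi.single j (1:ℝ) : Fin 3 → ℝ) k2)
      (φ'' * (Pi.single j (1:ℝ) : Fin 3 → ℝ) k1) (ψ'' * (Pi.single j (1:ℝ) : Fin 3 → ℝ) k2)
      0 k1 k2 j x (hφ2.mul_const _) (hψ2.mul_const _)
    exact this
  rw [lap, Fin.sum_univ_three, h2 0, h2 1, h2 2]
  fin_cases k1 <;> fin_cases k2 <;> simp [Pi.single_apply] <;> ring

lemma hasD_sin (K a c : ℝ) (s : ℝ) :
    HasDerivAt (fun s => K * Real.sin (a*(s+c))) (K*a*Real.cos (a*(s+c))) s := by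
  have h1 : HasDerivAt (fun s : ℝ => a*(s+c)) a s := by
    simpa using ((hasDerivAt_id s).add_const c).const_mul a
  have h2 := ((Real.hasDerivAt_sin (a*(s+c))).comp s h1).const_mul K
  refine h2.congr_deriv ?_
  ring

lemma hasD_cos (K a c : ℝ) (s : ℝ) :
    HasDerivAt (fun s => K * Real.cos (a*(s+c))) (-(K*a*Real.sin (a*(s+c)))) s := by
  have h1 : HasDerivAt (fun s : ℝ => a*(s+c)) a s := by
    simpa using ((hasDerivAt_id s).add_const c).const_mul a
  have h2 := ((Real.hasDerivAt_cos (a*(s+c))).comp s h1).const_mul K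
  refine h2.congr_deriv ?_
  ring

lemma hasF_sin (a c : ℝ) (k : Fin 3) (x : Fin 3 → ℝ) :
    HasFDerivAt (fun y : Fin 3 → ℝ => Real.sin (a*(y k + c)))
      ((a * Real.cos (a*(x k + c))) • (ContinuousLinearMap.proj (R := ℝ) (φ := fun _ : Fin 3 => ℝ) k)) x := by
  have h1 : HasDerivAt (fun s : ℝ => Real.sin (a*(s+c))) (a * Real.cos (a*(x k + c))) (x k) := by
    have := hasD_sin 1 a c (x k); simpa using this
  exact h1.comp_hasFDerivAt x (hasFDerivAt_apply (𝕜 := ℝ) k x)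

lemma hasF_cos (a c : ℝ) (k : Fin 3) (x : Fin 3 → ℝ) :
    HasFDerivAt (fun y : Fin 3 → ℝ => Real.cos (a*(y k + c)))
      ((-(a * Real.sin (a*(x k + c)))) • (ContinuousLinearMap.proj (R := ℝ) (φ := fun _ : Fin 3 => ℝ) k)) x := by
  have h1 : HasDerivAt (fun s : ℝ => Real.cos (a*(s+c))) (-(a * Real.sin (a*(x k + c)))) (x k) := by
    have := hasD_cos 1 a c (x k); simpa using this
  exact h1.comp_hasFDerivAt x (hasFDerivAt_apply (𝕜 := ℝ) k x)

lemma pd_p (A a c G : ℝ) (i : Fin 3) (x : Fin 3 → ℝ) :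
    pd (fun y => A * (Real.sin (a*(y 0 + c)) * Real.cos (a*(y 1 + c)) +
        Real.sin (a*(y 1 + c)) * Real.cos (a*(y 2 + c)) +
        Real.sin (a*(y 2 + c)) * Real.cos (a*(y 0 + c))) + G * (y 0 + y 1 + y 2)) i x
    = A * a * ((Real.cos (a*(x 0 + c)) * Real.cos (a*(x 1 + c))
          - Real.sin (a*(x 2 + c)) * Real.sin (a*(x 0 + c))) * (Pi.single i (1:ℝ) : Fin 3 → ℝ) 0
      + (Real.cos (a*(x 1 + c)) * Real.cos (a*(x 2 + c))
          - Real.sin (a*(x 0 + c)) * Real.sin (a*(x 1 + c))) * (Pi.single i (1:ℝ) : Fin 3 → ℝ) 1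
      + (Real.cos (a*(x 2 + c)) * Real.cos (a*(x 0 + c))
          - Real.sin (a*(x 1 + c)) * Real.sin (a*(x 2 + c))) * (Pi.single i (1:ℝ) : Fin 3 → ℝ) 2)
      + G * ((Pi.single i (1:ℝ) : Fin 3 → ℝ) 0 + (Pi.single i (1:ℝ) : Fin 3 → ℝ) 1
          + (Pi.single i (1:ℝ) : Fin 3 → ℝ) 2) := by
  have Hlin : HasFDerivAt (fun y : Fin 3 → ℝ => G * (y 0 + y 1 + y 2))
      (G • (((ContinuousLinearMap.proj (R := ℝ) (φ := fun _ : Fin 3 => ℝ) 0) +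
        (ContinuousLinearMap.proj (R := ℝ) (φ := fun _ : Fin 3 => ℝ) 1)) +
        (ContinuousLinearMap.proj (R := ℝ) (φ := fun _ : Fin 3 => ℝ) 2))) x :=
    (((hasFDerivAt_apply 0 x).add (hasFDerivAt_apply 1 x)).add (hasFDerivAt_apply 2 x)).const_mul G
  have H := (((((hasF_sin a c 0 x).mul (hasF_cos a c 1 x)).add
      ((hasF_sin a c 1 x).mul (hasF_cos a c 2 x))).add
      ((hasF_sin a c 2 x).mul (hasF_cos a c 0 x))).const_mul A).add Hlin
  rw [pd]; erw [H.fderiv]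
  simp
  ring

/-- Lemma 1: the explicit family of solutions, parametrized by a smooth `g`
with `g(0) = g'(0) = 0`, of the Navier–Stokes equations with zero force and
initial data `u⁰`. -/
theorem stmt1 (ν : ℝ) (hν : 0 < ν)
    (g : ℝ → ℝ) (hg : ContDiff ℝ (⊤ : ℕ∞) g) (hg0 : g 0 = 0) (hg'0 : deriv g 0 = 0)
    (β : ℝ) (hβ : β = (2 * π) ^ 2 * ν)
    (u : Fin 3 → (Fin 3 → ℝ) → ℝ → ℝ) (p : (Fin 3 → ℝ) → ℝ → ℝ)
    (hu0 : ∀ x t, u 0 x t =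
      Real.exp (-β * t) * (2 * π) *
        (Real.sin (2 * π * (x 1 + g t)) + Real.cos (2 * π * (x 2 + g t))) - deriv g t)
    (hu1 : ∀ x t, u 1 x t =
      Real.exp (-β * t) * (2 * π) *
        (Real.sin (2 * π * (x 2 + g t)) + Real.cos (2 * π * (x 0 + g t))) - deriv g t)
    (hu2 : ∀ x t, u 2 x t =
      Real.exp (-β * t) * (2 * π) *
        (Real.sin (2 * π * (x 0 + g t)) + Real.cos (2 * π * (x 1 + g t))) - deriv g t)
    (hp : ∀ x t, p x t =
      -(Real.exp (-(2 * β) * t)) * (2 * π) ^ 2 *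
        (Real.sin (2 * π * (x 0 + g t)) * Real.cos (2 * π * (x 1 + g t)) +
         Real.sin (2 * π * (x 1 + g t)) * Real.cos (2 * π * (x 2 + g t)) +
         Real.sin (2 * π * (x 2 + g t)) * Real.cos (2 * π * (x 0 + g t))) +
      deriv (deriv g) t * (x 0 + x 1 + x 2)) :
    -- u and p are smooth on ℝ³ × [0,∞)
    (∀ i : Fin 3, ContDiffOn ℝ (⊤ : ℕ∞)
      (fun q : (Fin 3 → ℝ) × ℝ => u i q.1 q.2) (Set.univ ×ˢ Set.Ici 0)) ∧
    ContDiffOn ℝ (⊤ : ℕ∞)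
      (fun q : (Fin 3 → ℝ) × ℝ => p q.1 q.2) (Set.univ ×ˢ Set.Ici 0) ∧
    -- Navier–Stokes equations with zero external force
    (∀ x : Fin 3 → ℝ, ∀ t : ℝ, 0 ≤ t → ∀ i : Fin 3,
      td (u i x) t + ∑ j : Fin 3, u j x t * pd (fun y => u i y t) j x =
        ν * lap (fun y => u i y t) x - pd (fun y => p y t) i x) ∧
    -- divergence-free
    (∀ x : Fin 3 → ℝ, ∀ t : ℝ, 0 ≤ t →
      ∑ i : Fin 3, pd (fun y => u i y t) i x = 0) ∧
    -- initial condition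
    (∀ x : Fin 3 → ℝ,
      u 0 x 0 = 2 * π * Real.sin (2 * π * x 1) + 2 * π * Real.cos (2 * π * x 2) ∧
      u 1 x 0 = 2 * π * Real.sin (2 * π * x 2) + 2 * π * Real.cos (2 * π * x 0) ∧
      u 2 x 0 = 2 * π * Real.sin (2 * π * x 0) + 2 * π * Real.cos (2 * π * x 1)) := by
  have hs : ContDiff ℝ (⊤:ℕ∞) Real.sin := Real.contDiff_sin
  have hc : ContDiff ℝ (⊤:ℕ∞) Real.cos := Real.contDiff_cos
  have he : ContDiff ℝ (⊤:ℕ∞) Real.exp := Real.contDiff_exp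
  have hg' : ContDiff ℝ (⊤:ℕ∞) (deriv g) := (contDiff_infty_iff_deriv.mp hg).2
  have hg'' : ContDiff ℝ (⊤:ℕ∞) (deriv (deriv g)) := (contDiff_infty_iff_deriv.mp hg').2
  have hgd : ∀ s, HasDerivAt g (deriv g s) s := fun s => (hg.differentiable (by simp) s).hasDerivAt
  have hgd2 : ∀ s, HasDerivAt (deriv g) (deriv (deriv g) s) s :=
    fun s => (hg'.differentiable (by simp) s).hasDerivAt
  -- function-shape rewrites
  have h0fun : ∀ t, (fun y : Fin 3 → ℝ => u 0 y t)
      = fun y => (Real.exp (-β*t) * (2*π)) * Real.sin (2*π*(y 1 + g t))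
          + (Real.exp (-β*t) * (2*π)) * Real.cos (2*π*(y 2 + g t)) - deriv g t := by
    intro t; funext y; rw [hu0]; ring
  have h1fun : ∀ t, (fun y : Fin 3 → ℝ => u 1 y t)
      = fun y => (Real.exp (-β*t) * (2*π)) * Real.sin (2*π*(y 2 + g t))
          + (Real.exp (-β*t) * (2*π)) * Real.cos (2*π*(y 0 + g t)) - deriv g t := by
    intro t; funext y; rw [hu1]; ring
  have h2fun : ∀ t, (fun y : Fin 3 → ℝ => u 2 y t)
      = fun y => (Real.exp (-β*t) * (2*π)) * Real.sin (2*π*(y 0 + g t))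
          + (Real.exp (-β*t) * (2*π)) * Real.cos (2*π*(y 1 + g t)) - deriv g t := by
    intro t; funext y; rw [hu2]; ring
  -- spatial first derivatives
  have hpd0 : ∀ (t : ℝ) (j : Fin 3) (y : Fin 3 → ℝ), pd (fun y => u 0 y t) j y
      = (Real.exp (-β*t)*(2*π)*(2*π)*Real.cos (2*π*(y 1 + g t))) * (Pi.single j (1:ℝ) : Fin 3 → ℝ) 1
        + (-(Real.exp (-β*t)*(2*π)*(2*π)*Real.sin (2*π*(y 2 + g t)))) * (Pi.single j (1:ℝ) : Fin 3 → ℝ) 2 := by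
    intro t j y; rw [h0fun t]
    exact pd_two _ _ _ _ _ 1 2 j y
      (hasD_sin (Real.exp (-β*t)*(2*π)) (2*π) (g t) (y 1))
      (hasD_cos (Real.exp (-β*t)*(2*π)) (2*π) (g t) (y 2))
  have hpd1 : ∀ (t : ℝ) (j : Fin 3) (y : Fin 3 → ℝ), pd (fun y => u 1 y t) j y
      = (Real.exp (-β*t)*(2*π)*(2*π)*Real.cos (2*π*(y 2 + g t))) * (Pi.single j (1:ℝ) : Fin 3 → ℝ) 2
        + (-(Real.exp (-β*t)*(2*π)*(2*π)*Real.sin (2*π*(y 0 + g t)))) * (Pi.single j (1:ℝ) : Fin 3 → ℝ) 0 := by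
    intro t j y; rw [h1fun t]
    exact pd_two _ _ _ _ _ 2 0 j y
      (hasD_sin (Real.exp (-β*t)*(2*π)) (2*π) (g t) (y 2))
      (hasD_cos (Real.exp (-β*t)*(2*π)) (2*π) (g t) (y 0))
  have hpd2 : ∀ (t : ℝ) (j : Fin 3) (y : Fin 3 → ℝ), pd (fun y => u 2 y t) j y
      = (Real.exp (-β*t)*(2*π)*(2*π)*Real.cos (2*π*(y 0 + g t))) * (Pi.single j (1:ℝ) : Fin 3 → ℝ) 0
        + (-(Real.exp (-β*t)*(2*π)*(2*π)*Real.sin (2*π*(y 1 + g t)))) * (Pi.single j (1:ℝ) : Fin 3 → ℝ) 1 := by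
    intro t j y; rw [h2fun t]
    exact pd_two _ _ _ _ _ 0 1 j y
      (hasD_sin (Real.exp (-β*t)*(2*π)) (2*π) (g t) (y 0))
      (hasD_cos (Real.exp (-β*t)*(2*π)) (2*π) (g t) (y 1))
  -- Laplacians
  have hlap0 : ∀ (t : ℝ) (x : Fin 3 → ℝ), lap (fun y => u 0 y t) x
      = -(Real.exp (-β*t)*(2*π)*(2*π)*(2*π)*Real.sin (2*π*(x 1 + g t)))
        + -(Real.exp (-β*t)*(2*π)*(2*π)*(2*π)*Real.cos (2*π*(x 2 + g t))) := by
    intro t x; rw [h0fun t]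
    exact lap_two (fun s => (Real.exp (-β*t) * (2*π)) * Real.sin (2*π*(s + g t)))
      (fun s => (Real.exp (-β*t) * (2*π)) * Real.cos (2*π*(s + g t)))
      (fun s => Real.exp (-β*t)*(2*π)*(2*π)*Real.cos (2*π*(s + g t)))
      (fun s => -(Real.exp (-β*t)*(2*π)*(2*π)*Real.sin (2*π*(s + g t))))
      (-(Real.exp (-β*t)*(2*π)*(2*π)*(2*π)*Real.sin (2*π*(x 1 + g t))))
      (-(Real.exp (-β*t)*(2*π)*(2*π)*(2*π)*Real.cos (2*π*(x 2 + g t))))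
      (deriv g t) 1 2 x
      (fun s => hasD_sin (Real.exp (-β*t)*(2*π)) (2*π) (g t) s)
      (fun s => hasD_cos (Real.exp (-β*t)*(2*π)) (2*π) (g t) s)
      (hasD_cos (Real.exp (-β*t)*(2*π)*(2*π)) (2*π) (g t) (x 1))
      ((hasD_sin (Real.exp (-β*t)*(2*π)*(2*π)) (2*π) (g t) (x 2)).neg)
  have hlap1 : ∀ (t : ℝ) (x : Fin 3 → ℝ), lap (fun y => u 1 y t) x
      = -(Real.exp (-β*t)*(2*π)*(2*π)*(2*π)*Real.sin (2*π*(x 2 + g t)))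
        + -(Real.exp (-β*t)*(2*π)*(2*π)*(2*π)*Real.cos (2*π*(x 0 + g t))) := by
    intro t x; rw [h1fun t]
    exact lap_two (fun s => (Real.exp (-β*t) * (2*π)) * Real.sin (2*π*(s + g t)))
      (fun s => (Real.exp (-β*t) * (2*π)) * Real.cos (2*π*(s + g t)))
      (fun s => Real.exp (-β*t)*(2*π)*(2*π)*Real.cos (2*π*(s + g t)))
      (fun s => -(Real.exp (-β*t)*(2*π)*(2*π)*Real.sin (2*π*(s + g t))))
      (-(Real.exp (-β*t)*(2*π)*(2*π)*(2*π)*Real.sin (2*π*(x 2 + g t))))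
      (-(Real.exp (-β*t)*(2*π)*(2*π)*(2*π)*Real.cos (2*π*(x 0 + g t))))
      (deriv g t) 2 0 x
      (fun s => hasD_sin (Real.exp (-β*t)*(2*π)) (2*π) (g t) s)
      (fun s => hasD_cos (Real.exp (-β*t)*(2*π)) (2*π) (g t) s)
      (hasD_cos (Real.exp (-β*t)*(2*π)*(2*π)) (2*π) (g t) (x 2))
      ((hasD_sin (Real.exp (-β*t)*(2*π)*(2*π)) (2*π) (g t) (x 0)).neg)
  have hlap2 : ∀ (t : ℝ) (x : Fin 3 → ℝ), lap (fun y => u 2 y t) x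
      = -(Real.exp (-β*t)*(2*π)*(2*π)*(2*π)*Real.sin (2*π*(x 0 + g t)))
        + -(Real.exp (-β*t)*(2*π)*(2*π)*(2*π)*Real.cos (2*π*(x 1 + g t))) := by
    intro t x; rw [h2fun t]
    exact lap_two (fun s => (Real.exp (-β*t) * (2*π)) * Real.sin (2*π*(s + g t)))
      (fun s => (Real.exp (-β*t) * (2*π)) * Real.cos (2*π*(s + g t)))
      (fun s => Real.exp (-β*t)*(2*π)*(2*π)*Real.cos (2*π*(s + g t)))
      (fun s => -(Real.exp (-β*t)*(2*π)*(2*π)*Real.sin (2*π*(s + g t))))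
      (-(Real.exp (-β*t)*(2*π)*(2*π)*(2*π)*Real.sin (2*π*(x 0 + g t))))
      (-(Real.exp (-β*t)*(2*π)*(2*π)*(2*π)*Real.cos (2*π*(x 1 + g t))))
      (deriv g t) 0 1 x
      (fun s => hasD_sin (Real.exp (-β*t)*(2*π)) (2*π) (g t) s)
      (fun s => hasD_cos (Real.exp (-β*t)*(2*π)) (2*π) (g t) s)
      (hasD_cos (Real.exp (-β*t)*(2*π)*(2*π)) (2*π) (g t) (x 0))
      ((hasD_sin (Real.exp (-β*t)*(2*π)*(2*π)) (2*π) (g t) (x 1)).neg)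
  -- pressure gradient
  have hE2 : ∀ t : ℝ, Real.exp (-(2*β)*t) = Real.exp (-β*t) * Real.exp (-β*t) := by
    intro t; rw [← Real.exp_add]; ring_nf
  have hpfun : ∀ t, (fun y : Fin 3 → ℝ => p y t)
      = fun y => (-(Real.exp (-(2*β)*t)) * (2*π)^2) *
          (Real.sin (2*π*(y 0 + g t)) * Real.cos (2*π*(y 1 + g t)) +
           Real.sin (2*π*(y 1 + g t)) * Real.cos (2*π*(y 2 + g t)) +
           Real.sin (2*π*(y 2 + g t)) * Real.cos (2*π*(y 0 + g t)))
          + (deriv (deriv g) t) * (y 0 + y 1 + y 2) := by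
    intro t; funext y; rw [hp]
  have hpdp : ∀ (t : ℝ) (i : Fin 3) (x : Fin 3 → ℝ), pd (fun y => p y t) i x
      = (-(Real.exp (-(2*β)*t)) * (2*π)^2) * (2*π) *
        ((Real.cos (2*π*(x 0 + g t)) * Real.cos (2*π*(x 1 + g t))
            - Real.sin (2*π*(x 2 + g t)) * Real.sin (2*π*(x 0 + g t))) * (Pi.single i (1:ℝ) : Fin 3 → ℝ) 0
        + (Real.cos (2*π*(x 1 + g t)) * Real.cos (2*π*(x 2 + g t))
            - Real.sin (2*π*(x 0 + g t)) * Real.sin (2*π*(x 1 + g t))) * (Pi.single i (1:ℝ) : Fin 3 → ℝ) 1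
        + (Real.cos (2*π*(x 2 + g t)) * Real.cos (2*π*(x 0 + g t))
            - Real.sin (2*π*(x 1 + g t)) * Real.sin (2*π*(x 2 + g t))) * (Pi.single i (1:ℝ) : Fin 3 → ℝ) 2)
        + (deriv (deriv g) t) * ((Pi.single i (1:ℝ) : Fin 3 → ℝ) 0
            + (Pi.single i (1:ℝ) : Fin 3 → ℝ) 1 + (Pi.single i (1:ℝ) : Fin 3 → ℝ) 2) := by
    intro t i x; rw [hpfun t]
    exact pd_p _ _ _ _ i x
  -- time derivatives
  have hE' : ∀ t : ℝ, HasDerivAt (fun s : ℝ => Real.exp (-β*s)) (Real.exp (-β*t) * (-β)) t := by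
    intro t
    have h1 : HasDerivAt (fun s : ℝ => -β*s) (-β) t := by
      simpa using (hasDerivAt_id t).const_mul (-β)
    exact (Real.hasDerivAt_exp (-β*t)).comp t h1
  have hsinT : ∀ (t w : ℝ), HasDerivAt (fun s => Real.sin (2*π*(w + g s)))
      (Real.cos (2*π*(w + g t)) * (2*π*deriv g t)) t := by
    intro t w
    have h1 : HasDerivAt (fun s : ℝ => 2*π*(w + g s)) (2*π*deriv g t) t :=
      ((hgd t).const_add w).const_mul (2*π)
    exact (Real.hasDerivAt_sin _).comp t h1
  have hcosT : ∀ (t w : ℝ), HasDerivAt (fun s => Real.cos (2*π*(w + g s)))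
      (-Real.sin (2*π*(w + g t)) * (2*π*deriv g t)) t := by
    intro t w
    have h1 : HasDerivAt (fun s : ℝ => 2*π*(w + g s)) (2*π*deriv g t) t :=
      ((hgd t).const_add w).const_mul (2*π)
    exact (Real.hasDerivAt_cos _).comp t h1
  have htd : ∀ (x : Fin 3 → ℝ) (t : ℝ), 0 ≤ t → ∀ w1 w2 : ℝ,
      derivWithin (fun s => Real.exp (-β*s) * (2*π) *
        (Real.sin (2*π*(w1 + g s)) + Real.cos (2*π*(w2 + g s))) - deriv g s) (Set.Ici 0) t
      = (Real.exp (-β*t) * (-β)) * (2*π) *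
          (Real.sin (2*π*(w1 + g t)) + Real.cos (2*π*(w2 + g t)))
        + Real.exp (-β*t) * (2*π) * (Real.cos (2*π*(w1 + g t)) * (2*π*deriv g t)
            + -Real.sin (2*π*(w2 + g t)) * (2*π*deriv g t))
        - deriv (deriv g) t := by
    intro x t ht w1 w2
    have H := ((((hE' t).mul_const (2*π)).mul ((hsinT t w1).add (hcosT t w2))).sub (hgd2 t))
    have := H.hasDerivWithinAt.derivWithin ((uniqueDiffOn_Ici 0) t ht)
    exact this
  refine ⟨?_, ?_, ?_, ?_, ?_⟩
  · -- smoothness of u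
    intro i
    fin_cases i
    · exact ((by fun_prop : ContDiff ℝ (⊤:ℕ∞) (fun q : (Fin 3 → ℝ) × ℝ =>
          Real.exp (-β*q.2) * (2*π) *
            (Real.sin (2*π*(q.1 1 + g q.2)) + Real.cos (2*π*(q.1 2 + g q.2)))
            - deriv g q.2)).contDiffOn).congr (fun q _ => hu0 q.1 q.2)
    · exact ((by fun_prop : ContDiff ℝ (⊤:ℕ∞) (fun q : (Fin 3 → ℝ) × ℝ =>
          Real.exp (-β*q.2) * (2*π) *
            (Real.sin (2*π*(q.1 2 + g q.2)) + Real.cos (2*π*(q.1 0 + g q.2)))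
            - deriv g q.2)).contDiffOn).congr (fun q _ => hu1 q.1 q.2)
    · exact ((by fun_prop : ContDiff ℝ (⊤:ℕ∞) (fun q : (Fin 3 → ℝ) × ℝ =>
          Real.exp (-β*q.2) * (2*π) *
            (Real.sin (2*π*(q.1 0 + g q.2)) + Real.cos (2*π*(q.1 1 + g q.2)))
            - deriv g q.2)).contDiffOn).congr (fun q _ => hu2 q.1 q.2)
  · -- smoothness of p
    exact ((by fun_prop : ContDiff ℝ (⊤:ℕ∞)
        (fun q : (Fin 3 → ℝ) × ℝ => -(Real.exp (-(2*β)*q.2)) * (2*π)^2 *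
            (Real.sin (2*π*(q.1 0 + g q.2)) * Real.cos (2*π*(q.1 1 + g q.2)) +
             Real.sin (2*π*(q.1 1 + g q.2)) * Real.cos (2*π*(q.1 2 + g q.2)) +
             Real.sin (2*π*(q.1 2 + g q.2)) * Real.cos (2*π*(q.1 0 + g q.2))) +
            deriv (deriv g) q.2 * (q.1 0 + q.1 1 + q.1 2))).contDiffOn).congr
      (fun q _ => hp q.1 q.2)
  · -- Navier–Stokes
    intro x t ht i
    have key0 : td (u 0 x) t + ∑ j : Fin 3, u j x t * pd (fun y => u 0 y t) j x =
        ν * lap (fun y => u 0 y t) x - pd (fun y => p y t) 0 x := by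
      have hufun : u 0 x = fun s => Real.exp (-β*s) * (2*π) *
          (Real.sin (2*π*(x 1 + g s)) + Real.cos (2*π*(x 2 + g s))) - deriv g s :=
        funext fun s => hu0 x s
      rw [Fin.sum_univ_three, hu0 x t, hu1 x t, hu2 x t,
        show td (u 0 x) t = derivWithin (u 0 x) (Set.Ici 0) t from rfl,
        hufun, htd x t ht (x 1) (x 2), hpd0 t 0 x, hpd0 t 1 x, hpd0 t 2 x, hlap0 t x,
        hpdp t 0 x, hE2 t, hβ]
      simp [Pi.single_apply]
      ring
    have key1 : td (u 1 x) t + ∑ j : Fin 3, u j x t * pd (fun y => u 1 y t) j x =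
        ν * lap (fun y => u 1 y t) x - pd (fun y => p y t) 1 x := by
      have hufun : u 1 x = fun s => Real.exp (-β*s) * (2*π) *
          (Real.sin (2*π*(x 2 + g s)) + Real.cos (2*π*(x 0 + g s))) - deriv g s :=
        funext fun s => hu1 x s
      rw [Fin.sum_univ_three, hu0 x t, hu1 x t, hu2 x t,
        show td (u 1 x) t = derivWithin (u 1 x) (Set.Ici 0) t from rfl,
        hufun, htd x t ht (x 2) (x 0), hpd1 t 0 x, hpd1 t 1 x, hpd1 t 2 x, hlap1 t x,
        hpdp t 1 x, hE2 t, hβ]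
      simp [Pi.single_apply]
      ring
    have key2 : td (u 2 x) t + ∑ j : Fin 3, u j x t * pd (fun y => u 2 y t) j x =
        ν * lap (fun y => u 2 y t) x - pd (fun y => p y t) 2 x := by
      have hufun : u 2 x = fun s => Real.exp (-β*s) * (2*π) *
          (Real.sin (2*π*(x 0 + g s)) + Real.cos (2*π*(x 1 + g s))) - deriv g s :=
        funext fun s => hu2 x s
      rw [Fin.sum_univ_three, hu0 x t, hu1 x t, hu2 x t,
        show td (u 2 x) t = derivWithin (u 2 x) (Set.Ici 0) t from rfl,
        hufun, htd x t ht (x 0) (x 1), hpd2 t 0 x, hpd2 t 1 x, hpd2 t 2 x, hlap2 t x,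
        hpdp t 2 x, hE2 t, hβ]
      simp [Pi.single_apply]
      ring
    fin_cases i
    exacts [key0, key1, key2]
  · -- divergence-free
    intro x t ht
    rw [Fin.sum_univ_three, hpd0 t 0 x, hpd1 t 1 x, hpd2 t 2 x]
    simp [Pi.single_apply]
  · -- initial condition
    intro x
    refine ⟨?_, ?_, ?_⟩ <;> simp [hu0, hu1, hu2, hg0, hg'0] <;> ring
end

section
/- Let ν > 0, a > 0, c ≠ 0, β = (2π)²ν, and define g(t) = (1/2)ct²/(a−t) for t < a. Define on ℝ³ × [0,a): u₁(x,t) = e^{−βt}·2π(sin(2π(x₂+g(t))) + cos(2π(x₃+g(t)))) − g'(t), u₂ and u₃ by cyclic permutation of the indices, and p(x,t) = −e^{−2βt}(2π)²[sin(2π(x₁+g(t)))cos(2π(x₂+g(t))) + sin(2π(x₂+g(t)))cos(2π(x₃+g(t))) + sin(2π(x₃+g(t)))cos(2π(x₁+g(t)))] + g''(t)(x₁+x₂+x₃). Then (u,p) is C^∞ on ℝ³ × [0,a), satisfies ∂u_i/∂t + Σ_j u_j ∂u_i/∂x_j = ν Δu_i − ∂p/∂x_i and div u = 0 there, u(x,0)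 equals the field u⁰ with u⁰₁(x) = 2π sin(2πx₂)+2π cos(2πx₃) (and cyclic permutations), u is periodic in space with period 1, and for every fixed x ∈ ℝ³ the function t ↦ |u₁(x,t)| tends to +∞ as t → a⁻; in particular u admits no continuous extension to ℝ³ × [0,a]. -/
open Real

lemma pd_of_hasFDerivAt {f : (Fin 3 → ℝ) → ℝ} {L : (Fin 3 → ℝ) →L[ℝ] ℝ} {x : Fin 3 → ℝ}
    (h : HasFDerivAt f L x) (j : Fin 3) : pd f j x = L (Pi.single j 1) := by
  rw [pd, h.fderiv]

/-- sin building block -/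
noncomputable def sinf (b G : ℝ) (k : Fin 3) : (Fin 3 → ℝ) → ℝ :=
  fun y => b * Real.sin (2 * π * (y k + G))

noncomputable def cosf (b G : ℝ) (k : Fin 3) : (Fin 3 → ℝ) → ℝ :=
  fun y => b * Real.cos (2 * π * (y k + G))

lemma hasFDerivAt_coord (k : Fin 3) (x : Fin 3 → ℝ) (G : ℝ) :
    HasFDerivAt (fun y : Fin 3 → ℝ => 2 * π * (y k + G))
      ((2 * π : ℝ) • (ContinuousLinearMap.proj k : (Fin 3 → ℝ) →L[ℝ] ℝ)) x := by
  have h1 : HasFDerivAt (fun y : Fin 3 → ℝ => y k)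
      (ContinuousLinearMap.proj k : (Fin 3 → ℝ) →L[ℝ] ℝ) x :=
    (ContinuousLinearMap.proj k : (Fin 3 → ℝ) →L[ℝ] ℝ).hasFDerivAt
  simpa [mul_add] using ((h1.add_const G).const_mul (2 * π))

lemma hasFDerivAt_sinf (b G : ℝ) (k : Fin 3) (x : Fin 3 → ℝ) :
    HasFDerivAt (sinf b G k)
      ((b * (2 * π) * Real.cos (2 * π * (x k + G))) •
        (ContinuousLinearMap.proj k : (Fin 3 → ℝ) →L[ℝ] ℝ)) x := by
  have h := ((Real.hasDerivAt_sin (2 * π * (x k + G))).comp_hasFDerivAt x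
      (hasFDerivAt_coord k x G)).const_mul b
  refine h.congr_fderiv ?_
  ext y
  simp [ContinuousLinearMap.smul_apply]
  ring

lemma hasFDerivAt_cosf (b G : ℝ) (k : Fin 3) (x : Fin 3 → ℝ) :
    HasFDerivAt (cosf b G k)
      ((-(b * (2 * π)) * Real.sin (2 * π * (x k + G))) •
        (ContinuousLinearMap.proj k : (Fin 3 → ℝ) →L[ℝ] ℝ)) x := by
  have h := ((Real.hasDerivAt_cos (2 * π * (x k + G))).comp_hasFDerivAt x
      (hasFDerivAt_coord k x G)).const_mul b
  refine h.congr_fderiv ?_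
  ext y
  simp [ContinuousLinearMap.smul_apply]
  ring

lemma diff_sinf (b G : ℝ) (k : Fin 3) : Differentiable ℝ (sinf b G k) :=
  fun x => (hasFDerivAt_sinf b G k x).differentiableAt

lemma diff_cosf (b G : ℝ) (k : Fin 3) : Differentiable ℝ (cosf b G k) :=
  fun x => (hasFDerivAt_cosf b G k x).differentiableAt

lemma pd_sinf (b G : ℝ) (k j : Fin 3) :
    pd (sinf b G k) j = fun x => (if k = j then 1 else 0) * cosf (b * (2 * π)) G k x := by
  funext x
  rw [pd_of_hasFDerivAt (hasFDerivAt_sinf b G k x)]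
  simp only [cosf, Pi.single_apply, ContinuousLinearMap.smul_apply,
    ContinuousLinearMap.proj_apply, smul_eq_mul]
  by_cases h : k = j <;> simp [h] <;> ring_nf

lemma pd_cosf (b G : ℝ) (k j : Fin 3) :
    pd (cosf b G k) j = fun x => (if k = j then 1 else 0) * sinf (-(b * (2 * π))) G k x := by
  funext x
  rw [pd_of_hasFDerivAt (hasFDerivAt_cosf b G k x)]
  simp only [sinf, Pi.single_apply, ContinuousLinearMap.smul_apply,
    ContinuousLinearMap.proj_apply, smul_eq_mul]
  by_cases h : k = j <;> simp [h] <;> ring_nf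

lemma pd_add {f h : (Fin 3 → ℝ) → ℝ} (hf : Differentiable ℝ f) (hh : Differentiable ℝ h)
    (j : Fin 3) : pd (fun y => f y + h y) j = fun x => pd f j x + pd h j x := by
  funext x
  refine (pd_of_hasFDerivAt ((hf x).hasFDerivAt.add (hh x).hasFDerivAt) j).trans ?_
  simp [pd]

lemma pd_sub_const {f : (Fin 3 → ℝ) → ℝ} (hf : Differentiable ℝ f) (r : ℝ)
    (j : Fin 3) : pd (fun y => f y - r) j = fun x => pd f j x := by
  funext x
  rw [pd_of_hasFDerivAt ((hf x).hasFDerivAt.sub_const r)]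
  simp [pd]

lemma pd_const (r : ℝ) (j : Fin 3) : pd (fun _ => r) j = fun _ => 0 := by
  funext x
  rw [pd_of_hasFDerivAt (hasFDerivAt_const r x)]
  simp

-- g lemmas
section gsec
variable (a c : ℝ)

noncomputable def gfun : ℝ → ℝ := fun t => (1 / 2) * c * t ^ 2 / (a - t)
noncomputable def g1 : ℝ → ℝ := fun t => c / 2 * (t * (2 * a - t)) / (a - t) ^ 2
noncomputable def g2 : ℝ → ℝ := fun t => c * a ^ 2 / (a - t) ^ 3

lemma hasDerivAt_gfun {t : ℝ} (ht : t ≠ a) : HasDerivAt (gfun a c) (g1 a c t) t := by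
  have hne : a - t ≠ 0 := sub_ne_zero.2 (Ne.symm ht)
  have h1 : HasDerivAt (fun t : ℝ => (1 / 2) * c * t ^ 2) ((1 / 2) * c * (2 * t)) t := by
    simpa using ((hasDerivAt_pow 2 t).const_mul ((1 / 2) * c))
  have h2 : HasDerivAt (fun t : ℝ => a - t) (-1) t := by
    simpa using ((hasDerivAt_id t).const_sub a)
  have := h1.div h2 hne
  refine this.congr_deriv ?_
  unfold g1
  field_simp
  ring

lemma hasDerivAt_g1 {t : ℝ} (ht : t ≠ a) : HasDerivAt (g1 a c) (g2 a c t) t := by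
  have hne : a - t ≠ 0 := sub_ne_zero.2 (Ne.symm ht)
  have h1 : HasDerivAt (fun t : ℝ => c / 2 * (t * (2 * a - t))) (c / 2 * (2 * a - 2 * t)) t := by
    have : HasDerivAt (fun t : ℝ => t * (2 * a - t)) (1 * (2 * a - t) + t * (-1)) t :=
      (hasDerivAt_id t).mul ((hasDerivAt_id t).const_sub (2 * a))
    refine (this.const_mul (c / 2)).congr_deriv ?_
    ring
  have h2 : HasDerivAt (fun t : ℝ => (a - t) ^ 2) (2 * (a - t) * (-1)) t := by
    have hb : HasDerivAt (fun t : ℝ => a - t) (-1) t := by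
      simpa using ((hasDerivAt_id t).const_sub a)
    have h3 := hb.pow 2
    simp at h3
    exact h3.congr_deriv (by ring)
  have := h1.div h2 (pow_ne_zero 2 hne)
  refine this.congr_deriv ?_
  unfold g2
  field_simp
  ring

lemma deriv_gfun {t : ℝ} (ht : t ≠ a) : deriv (gfun a c) t = g1 a c t :=
  (hasDerivAt_gfun a c ht).deriv

lemma hasDerivAt_deriv_gfun {t : ℝ} (ht : t < a) :
    HasDerivAt (deriv (gfun a c)) (g2 a c t) t := by
  apply (hasDerivAt_g1 a c (ne_of_lt ht)).congr_of_eventuallyEq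
  filter_upwards [Iio_mem_nhds ht] with s hs
  exact deriv_gfun a c (ne_of_lt hs)

lemma deriv_deriv_gfun {t : ℝ} (ht : t < a) :
    deriv (deriv (gfun a c)) t = g2 a c t :=
  (hasDerivAt_deriv_gfun a c ht).deriv

lemma contDiffOn_gfun : ContDiffOn ℝ (⊤ : ℕ∞) (gfun a c) (Set.Iio a) := by
  apply ContDiffOn.div (by fun_prop) (by fun_prop)
  intro t ht
  exact sub_ne_zero.2 (ne_of_lt ht).symm

lemma contDiffOn_g1 : ContDiffOn ℝ (⊤ : ℕ∞) (g1 a c) (Set.Iio a) := by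
  apply ContDiffOn.div (by fun_prop) (by fun_prop)
  intro t ht
  exact pow_ne_zero 2 (sub_ne_zero.2 (ne_of_lt ht).symm)

lemma contDiffOn_g2 : ContDiffOn ℝ (⊤ : ℕ∞) (g2 a c) (Set.Iio a) := by
  apply ContDiffOn.div (by fun_prop) (by fun_prop)
  intro t ht
  exact pow_ne_zero 3 (sub_ne_zero.2 (ne_of_lt ht).symm)

end gsec

lemma hasDerivAt_tslice (a c β r1 r2 : ℝ) {t : ℝ} (ht : t < a) :
    HasDerivAt (fun t => Real.exp (-β * t) * (2 * π) *
        (Real.sin (2 * π * (r1 + gfun a c t)) + Real.cos (2 * π * (r2 + gfun a c t)))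
        - deriv (gfun a c) t)
      ((-β) * Real.exp (-β * t) * (2 * π) *
          (Real.sin (2 * π * (r1 + gfun a c t)) + Real.cos (2 * π * (r2 + gfun a c t)))
        + Real.exp (-β * t) * (2 * π) *
          ((Real.cos (2 * π * (r1 + gfun a c t)) - Real.sin (2 * π * (r2 + gfun a c t)))
            * (2 * π * g1 a c t))
        - g2 a c t) t := by
  have hg' := hasDerivAt_gfun a c (ne_of_lt ht)
  have hmul : HasDerivAt (fun t : ℝ => -β * t) (-β) t := by
    simpa using (hasDerivAt_id t).const_mul (-β)
  have hE : HasDerivAt (fun t : ℝ => Real.exp (-β * t) * (2 * π))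
      ((-β) * Real.exp (-β * t) * (2 * π)) t := by
    have := (hmul.exp).mul_const (2 * π)
    exact this.congr_deriv (by ring)
  have hin1 : HasDerivAt (fun t : ℝ => 2 * π * (r1 + gfun a c t)) (2 * π * g1 a c t) t :=
    (hg'.const_add r1).const_mul (2 * π)
  have hin2 : HasDerivAt (fun t : ℝ => 2 * π * (r2 + gfun a c t)) (2 * π * g1 a c t) t :=
    (hg'.const_add r2).const_mul (2 * π)
  have hs1 := hin1.sin
  have hc2 := hin2.cos
  have hdg := hasDerivAt_deriv_gfun a c ht
  have := (hE.mul (hs1.add hc2)).sub hdg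
  refine this.congr_deriv ?_
  simp only [Pi.add_apply]
  ring

lemma slice_eq (E G d : ℝ) (k m : Fin 3) :
    (fun y : Fin 3 → ℝ => E * (Real.sin (2 * π * (y k + G)) + Real.cos (2 * π * (y m + G))) - d)
      = fun y => (sinf E G k y + cosf E G m y) - d := by
  funext y; simp [sinf, cosf]; ring

lemma pd_slice (E G d : ℝ) (k m j : Fin 3) (x : Fin 3 → ℝ) :
    pd (fun y : Fin 3 → ℝ =>
        E * (Real.sin (2 * π * (y k + G)) + Real.cos (2 * π * (y m + G))) - d) j x
      = (if k = j then 1 else 0) * (E * (2 * π)) * Real.cos (2 * π * (x k + G))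
        + (if m = j then 1 else 0) * (-(E * (2 * π))) * Real.sin (2 * π * (x m + G)) := by
  rw [slice_eq, pd_sub_const (f := fun y => sinf E G k y + cosf E G m y) ((diff_sinf E G k).add (diff_cosf E G m)),
    pd_add (diff_sinf E G k) (diff_cosf E G m), pd_sinf, pd_cosf]
  simp [sinf, cosf]
  try ring

lemma lap_slice (E G d : ℝ) (k m : Fin 3) (x : Fin 3 → ℝ) :
    lap (fun y : Fin 3 → ℝ =>
        E * (Real.sin (2 * π * (y k + G)) + Real.cos (2 * π * (y m + G))) - d) x
      = -(2 * π) ^ 2 * E * (Real.sin (2 * π * (x k + G)) + Real.cos (2 * π * (x m + G))) := by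
  unfold lap
  rw [slice_eq]
  have hpd : ∀ j, pd (fun y => (sinf E G k y + cosf E G m y) - d) j
      = fun z => cosf ((if k = j then 1 else 0) * (E * (2 * π))) G k z
        + sinf ((if m = j then 1 else 0) * (-(E * (2 * π)))) G m z := by
    intro j
    rw [pd_sub_const (f := fun y => sinf E G k y + cosf E G m y) ((diff_sinf E G k).add (diff_cosf E G m)),
      pd_add (diff_sinf E G k) (diff_cosf E G m), pd_sinf, pd_cosf]
    funext z; simp [sinf, cosf]; try ring
  have hpd2 : ∀ j, pd (pd (fun y => (sinf E G k y + cosf E G m y) - d) j) j x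
      = (if k = j then 1 else 0) * (-(E * (2 * π) * (2 * π))) * Real.sin (2 * π * (x k + G))
        + (if m = j then 1 else 0) * (-(E * (2 * π) * (2 * π))) * Real.cos (2 * π * (x m + G)) := by
    intro j
    rw [hpd j, pd_add (diff_cosf _ G k) (diff_sinf _ G m), pd_cosf, pd_sinf]
    by_cases h1 : k = j <;> by_cases h2 : m = j <;> simp [sinf, cosf, h1, h2] <;> try ring
  simp only [hpd2]
  rw [Finset.sum_add_distrib]
  simp [ite_mul, Finset.sum_ite_eq]
  ring

lemma pd_pslice (D G2v G : ℝ) (i : Fin 3) (x : Fin 3 → ℝ) :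
    pd (fun y : Fin 3 → ℝ =>
      -D * (2 * π) ^ 2 *
        (Real.sin (2 * π * (y 0 + G)) * Real.cos (2 * π * (y 1 + G)) +
         Real.sin (2 * π * (y 1 + G)) * Real.cos (2 * π * (y 2 + G)) +
         Real.sin (2 * π * (y 2 + G)) * Real.cos (2 * π * (y 0 + G))) +
      G2v * (y 0 + y 1 + y 2)) i x
    = -D * (2 * π) ^ 2 * (2 * π) *
        ((if (0 : Fin 3) = i then (1:ℝ) else 0) *
            (Real.cos (2 * π * (x 0 + G)) * Real.cos (2 * π * (x 1 + G))
              - Real.sin (2 * π * (x 2 + G)) * Real.sin (2 * π * (x 0 + G))) +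
         (if (1 : Fin 3) = i then (1:ℝ) else 0) *
            (Real.cos (2 * π * (x 1 + G)) * Real.cos (2 * π * (x 2 + G))
              - Real.sin (2 * π * (x 0 + G)) * Real.sin (2 * π * (x 1 + G))) +
         (if (2 : Fin 3) = i then (1:ℝ) else 0) *
            (Real.cos (2 * π * (x 2 + G)) * Real.cos (2 * π * (x 0 + G))
              - Real.sin (2 * π * (x 1 + G)) * Real.sin (2 * π * (x 2 + G))))
      + G2v := by
  have hs : ∀ k : Fin 3, HasFDerivAt (fun y : Fin 3 → ℝ => Real.sin (2 * π * (y k + G)))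
      ((Real.cos (2 * π * (x k + G)) * (2 * π)) •
        (ContinuousLinearMap.proj k : (Fin 3 → ℝ) →L[ℝ] ℝ)) x := by
    intro k
    simpa [smul_smul, Function.comp_def] using (Real.hasDerivAt_sin (2 * π * (x k + G))).comp_hasFDerivAt x
      (hasFDerivAt_coord k x G)
  have hc : ∀ k : Fin 3, HasFDerivAt (fun y : Fin 3 → ℝ => Real.cos (2 * π * (y k + G)))
      (-((Real.sin (2 * π * (x k + G)) * (2 * π)) •
        (ContinuousLinearMap.proj k : (Fin 3 → ℝ) →L[ℝ] ℝ))) x := by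
    intro k
    simpa [Function.comp_def, smul_smul, neg_smul] using (Real.hasDerivAt_cos (2 * π * (x k + G))).comp_hasFDerivAt x
      (hasFDerivAt_coord k x G)
  have h01 := (hs 0).mul (hc 1)
  have h12 := (hs 1).mul (hc 2)
  have h20 := (hs 2).mul (hc 0)
  have hsum := ((h01.add h12).add h20).const_mul (-D * (2 * π) ^ 2)
  have hlin : HasFDerivAt (fun y : Fin 3 → ℝ => G2v * (y 0 + y 1 + y 2))
      (G2v • (((ContinuousLinearMap.proj 0 : (Fin 3 → ℝ) →L[ℝ] ℝ)
        + ContinuousLinearMap.proj 1) + ContinuousLinearMap.proj 2)) x := by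
    have := ((((ContinuousLinearMap.proj (R := ℝ) (φ := fun _ : Fin 3 => ℝ) 0).hasFDerivAt (x := x)).add
      ((ContinuousLinearMap.proj 1).hasFDerivAt)).add
      ((ContinuousLinearMap.proj 2).hasFDerivAt)).const_mul G2v
    simpa using this
  have htot := hsum.add hlin
  refine (pd_of_hasFDerivAt htot i).trans ?_
  simp only [ContinuousLinearMap.add_apply, ContinuousLinearMap.smul_apply,
    ContinuousLinearMap.proj_apply, smul_eq_mul, Pi.single_apply]
  fin_cases i <;> norm_num [Fin.ext_iff, Pi.single_apply] <;> ring

lemma sin_shift (y z : ℝ) (q : Prop) [Decidable q] :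
    Real.sin (2 * π * (y + (if q then (1:ℝ) else 0) + z)) = Real.sin (2 * π * (y + z)) := by
  split
  · rw [show 2 * π * (y + 1 + z) = 2 * π * (y + z) + 2 * π by ring, Real.sin_add_two_pi]
  · norm_num

lemma cos_shift (y z : ℝ) (q : Prop) [Decidable q] :
    Real.cos (2 * π * (y + (if q then (1:ℝ) else 0) + z)) = Real.cos (2 * π * (y + z)) := by
  split
  · rw [show 2 * π * (y + 1 + z) = 2 * π * (y + z) + 2 * π by ring, Real.cos_add_two_pi]
  · norm_num

lemma abs_tendsto_g1 (a c : ℝ) (ha : 0 < a) (hc : c ≠ 0) :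
    Filter.Tendsto (fun t => |g1 a c t|) (nhdsWithin a (Set.Iio a)) Filter.atTop := by
  have h1 : Filter.Tendsto (fun t : ℝ => |c / 2 * (t * (2 * a - t))|)
      (nhdsWithin a (Set.Iio a)) (nhds (|c / 2 * (a * (2 * a - a))|)) := by
    apply Filter.Tendsto.mono_left _ nhdsWithin_le_nhds
    exact (Continuous.abs (by continuity)).tendsto a
  have h2 : Filter.Tendsto (fun t : ℝ => ((a - t) ^ 2)⁻¹)
      (nhdsWithin a (Set.Iio a)) Filter.atTop := by
    apply Filter.Tendsto.comp tendsto_inv_nhdsGT_zero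
    rw [tendsto_nhdsWithin_iff]
    constructor
    · refine Filter.Tendsto.mono_left ?_ nhdsWithin_le_nhds
      have : Continuous (fun t : ℝ => (a - t) ^ 2) := by continuity
      simpa using this.tendsto a
    · filter_upwards [self_mem_nhdsWithin] with t ht
      exact Set.mem_Ioi.2 (pow_pos (sub_pos.2 ht) 2)
  have heq : ∀ t, |g1 a c t| = |c / 2 * (t * (2 * a - t))| * ((a - t) ^ 2)⁻¹ := by
    intro t
    rw [g1, abs_div, abs_of_nonneg (sq_nonneg (a - t)), div_eq_mul_inv]
  have hC : (0:ℝ) < |c / 2 * (a * (2 * a - a))| := by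
    rw [show c / 2 * (a * (2 * a - a)) = c / 2 * a ^ 2 by ring]
    have : c / 2 * a ^ 2 ≠ 0 := by
      apply mul_ne_zero (by simpa using hc) (pow_ne_zero 2 (ne_of_gt ha))
    exact abs_pos.2 this
  simp only [heq]
  exact Filter.Tendsto.pos_mul_atTop hC h1 h2

section smooth
variable (a c : ℝ)

lemma cd_gsnd : ContDiffOn ℝ (⊤:ℕ∞) (fun q : (Fin 3 → ℝ) × ℝ => gfun a c q.2)
    (Set.univ ×ˢ Set.Iio a) :=
  (contDiffOn_gfun a c).comp (contDiff_snd.contDiffOn) (fun q hq => hq.2)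

lemma cd_g1snd : ContDiffOn ℝ (⊤:ℕ∞) (fun q : (Fin 3 → ℝ) × ℝ => g1 a c q.2)
    (Set.univ ×ˢ Set.Iio a) :=
  (contDiffOn_g1 a c).comp (contDiff_snd.contDiffOn) (fun q hq => hq.2)

lemma cd_g2snd : ContDiffOn ℝ (⊤:ℕ∞) (fun q : (Fin 3 → ℝ) × ℝ => g2 a c q.2)
    (Set.univ ×ˢ Set.Iio a) :=
  (contDiffOn_g2 a c).comp (contDiff_snd.contDiffOn) (fun q hq => hq.2)

lemma cd_sin (k : Fin 3) : ContDiffOn ℝ (⊤:ℕ∞)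
    (fun q : (Fin 3 → ℝ) × ℝ => Real.sin (2 * π * (q.1 k + gfun a c q.2)))
    (Set.univ ×ˢ Set.Iio a) := by
  apply Real.contDiff_sin.comp_contDiffOn
  apply ContDiffOn.mul contDiffOn_const
  have h : ContDiff ℝ (⊤:ℕ∞) (fun q : (Fin 3 → ℝ) × ℝ => q.1 k) := by fun_prop
  exact h.contDiffOn.add (cd_gsnd a c)

end smooth

section smooth2
variable (a c : ℝ)

lemma cd_cos (k : Fin 3) : ContDiffOn ℝ (⊤:ℕ∞)
    (fun q : (Fin 3 → ℝ) × ℝ => Real.cos (2 * π * (q.1 k + gfun a c q.2)))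
    (Set.univ ×ˢ Set.Iio a) := by
  apply Real.contDiff_cos.comp_contDiffOn
  apply ContDiffOn.mul contDiffOn_const
  have h : ContDiff ℝ (⊤:ℕ∞) (fun q : (Fin 3 → ℝ) × ℝ => q.1 k) := by fun_prop
  exact h.contDiffOn.add (cd_gsnd a c)

lemma cd_uslice (β : ℝ) (k m : Fin 3) : ContDiffOn ℝ (⊤:ℕ∞)
    (fun q : (Fin 3 → ℝ) × ℝ => Real.exp (-β * q.2) * (2 * π) *
      (Real.sin (2 * π * (q.1 k + gfun a c q.2)) + Real.cos (2 * π * (q.1 m + gfun a c q.2)))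
      - g1 a c q.2)
    (Set.univ ×ˢ Set.Iio a) := by
  apply ContDiffOn.sub _ (cd_g1snd a c)
  apply ContDiffOn.mul _ ((cd_sin a c k).add (cd_cos a c m))
  have h : ContDiff ℝ (⊤:ℕ∞) (fun q : (Fin 3 → ℝ) × ℝ => Real.exp (-β * q.2) * (2 * π)) := by
    fun_prop
  exact h.contDiffOn

lemma cd_pslice (β : ℝ) : ContDiffOn ℝ (⊤:ℕ∞)
    (fun q : (Fin 3 → ℝ) × ℝ => -(Real.exp (-(2 * β) * q.2)) * (2 * π) ^ 2 *
      (Real.sin (2 * π * (q.1 0 + gfun a c q.2)) * Real.cos (2 * π * (q.1 1 + gfun a c q.2)) +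
       Real.sin (2 * π * (q.1 1 + gfun a c q.2)) * Real.cos (2 * π * (q.1 2 + gfun a c q.2)) +
       Real.sin (2 * π * (q.1 2 + gfun a c q.2)) * Real.cos (2 * π * (q.1 0 + gfun a c q.2))) +
      g2 a c q.2 * (q.1 0 + q.1 1 + q.1 2))
    (Set.univ ×ˢ Set.Iio a) := by
  apply ContDiffOn.add
  · apply ContDiffOn.mul
    · have h : ContDiff ℝ (⊤:ℕ∞)
          (fun q : (Fin 3 → ℝ) × ℝ => -(Real.exp (-(2 * β) * q.2)) * (2 * π) ^ 2) := by fun_prop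
      exact h.contDiffOn
    · exact (((cd_sin a c 0).mul (cd_cos a c 1)).add
        ((cd_sin a c 1).mul (cd_cos a c 2))).add ((cd_sin a c 2).mul (cd_cos a c 0))
  · apply ContDiffOn.mul (cd_g2snd a c)
    have h : ContDiff ℝ (⊤:ℕ∞) (fun q : (Fin 3 → ℝ) × ℝ => q.1 0 + q.1 1 + q.1 2) := by fun_prop
    exact h.contDiffOn

end smooth2

/-- The solution of Lemma 1 specialized to `g(t) = (1/2)ct²/(a−t)`: a smooth
solution of Navier–Stokes (zero force) on `ℝ³ × [0,a)`, space-periodic, with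
the prescribed initial data, whose first velocity component blows up as
`t → a⁻`; in particular there is no continuous extension to `ℝ³ × [0,a]`. -/
theorem stmt4 (ν : ℝ) (hν : 0 < ν) (a : ℝ) (ha : 0 < a) (c : ℝ) (hc : c ≠ 0)
    (β : ℝ) (hβ : β = (2 * π) ^ 2 * ν)
    (g : ℝ → ℝ) (hg : g = fun t => (1 / 2) * c * t ^ 2 / (a - t))
    (u : Fin 3 → (Fin 3 → ℝ) → ℝ → ℝ) (p : (Fin 3 → ℝ) → ℝ → ℝ)
    (hu0 : ∀ x t, u 0 x t =
      Real.exp (-β * t) * (2 * π) *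
        (Real.sin (2 * π * (x 1 + g t)) + Real.cos (2 * π * (x 2 + g t))) - deriv g t)
    (hu1 : ∀ x t, u 1 x t =
      Real.exp (-β * t) * (2 * π) *
        (Real.sin (2 * π * (x 2 + g t)) + Real.cos (2 * π * (x 0 + g t))) - deriv g t)
    (hu2 : ∀ x t, u 2 x t =
      Real.exp (-β * t) * (2 * π) *
        (Real.sin (2 * π * (x 0 + g t)) + Real.cos (2 * π * (x 1 + g t))) - deriv g t)
    (hp : ∀ x t, p x t =
      -(Real.exp (-(2 * β) * t)) * (2 * π) ^ 2 *
        (Real.sin (2 * π * (x 0 + g t)) * Real.cos (2 * π * (x 1 + g t)) +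
         Real.sin (2 * π * (x 1 + g t)) * Real.cos (2 * π * (x 2 + g t)) +
         Real.sin (2 * π * (x 2 + g t)) * Real.cos (2 * π * (x 0 + g t))) +
      deriv (deriv g) t * (x 0 + x 1 + x 2)) :
    -- smoothness on ℝ³ × [0,a)
    (∀ i : Fin 3, ContDiffOn ℝ (⊤ : ℕ∞)
      (fun q : (Fin 3 → ℝ) × ℝ => u i q.1 q.2) (Set.univ ×ˢ Set.Ico 0 a)) ∧
    ContDiffOn ℝ (⊤ : ℕ∞)
      (fun q : (Fin 3 → ℝ) × ℝ => p q.1 q.2) (Set.univ ×ˢ Set.Ico 0 a) ∧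
    -- Navier–Stokes equations with zero external force on ℝ³ × [0,a)
    (∀ x : Fin 3 → ℝ, ∀ t : ℝ, t ∈ Set.Ico 0 a → ∀ i : Fin 3,
      td (u i x) t + ∑ j : Fin 3, u j x t * pd (fun y => u i y t) j x =
        ν * lap (fun y => u i y t) x - pd (fun y => p y t) i x) ∧
    -- divergence-free
    (∀ x : Fin 3 → ℝ, ∀ t : ℝ, t ∈ Set.Ico 0 a →
      ∑ i : Fin 3, pd (fun y => u i y t) i x = 0) ∧
    -- initial condition
    (∀ x : Fin 3 → ℝ,
      u 0 x 0 = 2 * π * Real.sin (2 * π * x 1) + 2 * π * Real.cos (2 * π * x 2) ∧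
      u 1 x 0 = 2 * π * Real.sin (2 * π * x 2) + 2 * π * Real.cos (2 * π * x 0) ∧
      u 2 x 0 = 2 * π * Real.sin (2 * π * x 0) + 2 * π * Real.cos (2 * π * x 1)) ∧
    -- space-periodicity with period 1
    (∀ i : Fin 3, ∀ x : Fin 3 → ℝ, ∀ t : ℝ, t ∈ Set.Ico 0 a → ∀ j : Fin 3,
      u i (x + Pi.single j 1) t = u i x t) ∧
    -- blow-up of |u₁(x,·)| as t → a⁻
    (∀ x : Fin 3 → ℝ,
      Filter.Tendsto (fun t => |u 0 x t|) (nhdsWithin a (Set.Iio a)) Filter.atTop) ∧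
    -- no continuous extension to ℝ³ × [0,a]
    ¬(∃ v : Fin 3 → (Fin 3 → ℝ) → ℝ → ℝ,
        (∀ i : Fin 3, ContinuousOn
          (fun q : (Fin 3 → ℝ) × ℝ => v i q.1 q.2) (Set.univ ×ˢ Set.Icc 0 a)) ∧
        (∀ i : Fin 3, ∀ x : Fin 3 → ℝ, ∀ t : ℝ, t ∈ Set.Ico 0 a → v i x t = u i x t)) := by
  have hgf : g = gfun a c := hg
  subst hgf
  -- smoothness of u
  have smooth_u : ∀ i : Fin 3, ContDiffOn ℝ (⊤ : ℕ∞)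
      (fun q : (Fin 3 → ℝ) × ℝ => u i q.1 q.2) (Set.univ ×ˢ Set.Ico 0 a) := by
    have hsub : (Set.univ ×ˢ Set.Ico 0 a : Set ((Fin 3 → ℝ) × ℝ)) ⊆ Set.univ ×ˢ Set.Iio a :=
      Set.prod_mono (Set.Subset.rfl) Set.Ico_subset_Iio_self
    have h0 : ContDiffOn ℝ (⊤ : ℕ∞)
        (fun q : (Fin 3 → ℝ) × ℝ => u 0 q.1 q.2) (Set.univ ×ˢ Set.Ico 0 a) := by
      apply ((cd_uslice a c β 1 2).mono hsub).congr
      intro q hq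
      rw [hu0, deriv_gfun a c (ne_of_lt hq.2.2)]
    have h1 : ContDiffOn ℝ (⊤ : ℕ∞)
        (fun q : (Fin 3 → ℝ) × ℝ => u 1 q.1 q.2) (Set.univ ×ˢ Set.Ico 0 a) := by
      apply ((cd_uslice a c β 2 0).mono hsub).congr
      intro q hq
      rw [hu1, deriv_gfun a c (ne_of_lt hq.2.2)]
    have h2 : ContDiffOn ℝ (⊤ : ℕ∞)
        (fun q : (Fin 3 → ℝ) × ℝ => u 2 q.1 q.2) (Set.univ ×ˢ Set.Ico 0 a) := by
      apply ((cd_uslice a c β 0 1).mono hsub).congr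
      intro q hq
      rw [hu2, deriv_gfun a c (ne_of_lt hq.2.2)]
    intro i
    fin_cases i
    · exact h0
    · exact h1
    · exact h2
  have blowup : ∀ x : Fin 3 → ℝ,
      Filter.Tendsto (fun t => |u 0 x t|) (nhdsWithin a (Set.Iio a)) Filter.atTop := by
    intro x
    have hβ0 : 0 ≤ β := by rw [hβ]; positivity
    have hg1top : Filter.Tendsto (fun t => |g1 a c t| - 4 * π)
        (nhdsWithin a (Set.Iio a)) Filter.atTop := by
      have := Filter.tendsto_atTop_add_const_right (nhdsWithin a (Set.Iio a)) (-(4 * π))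
        (abs_tendsto_g1 a c ha hc)
      simpa [sub_eq_add_neg] using this
    apply Filter.tendsto_atTop_mono' _ _ hg1top
    filter_upwards [Ioo_mem_nhdsLT_of_mem (Set.mem_Ioc.2 ⟨ha, le_refl a⟩)] with t ht
    rw [hu0, deriv_gfun a c (ne_of_lt ht.2)]
    have he : Real.exp (-β * t) ≤ 1 := by
      rw [Real.exp_le_one_iff]
      have : 0 ≤ β * t := mul_nonneg hβ0 (le_of_lt ht.1)
      linarith
    have hsum : |Real.sin (2 * π * (x 1 + gfun a c t)) + Real.cos (2 * π * (x 2 + gfun a c t))| ≤ 2 := by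
      calc |Real.sin (2 * π * (x 1 + gfun a c t)) + Real.cos (2 * π * (x 2 + gfun a c t))|
          ≤ |Real.sin (2 * π * (x 1 + gfun a c t))| + |Real.cos (2 * π * (x 2 + gfun a c t))| :=
            abs_add_le _ _
        _ ≤ 2 := by
            have h1 := Real.abs_sin_le_one (2 * π * (x 1 + gfun a c t))
            have h2 := Real.abs_cos_le_one (2 * π * (x 2 + gfun a c t))
            linarith
    have hE : |Real.exp (-β * t) * (2 * π) *
        (Real.sin (2 * π * (x 1 + gfun a c t)) + Real.cos (2 * π * (x 2 + gfun a c t)))| ≤ 4 * π := by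
      rw [abs_mul, abs_mul, abs_of_pos (Real.exp_pos _), abs_of_pos (by positivity : (0:ℝ) < 2 * π)]
      have h1 : Real.exp (-β * t) * (2 * π) ≤ 1 * (2 * π) := by
        apply mul_le_mul_of_nonneg_right he (by positivity)
      nlinarith [Real.exp_pos (-β * t), Real.pi_pos,
        abs_nonneg (Real.sin (2 * π * (x 1 + gfun a c t)) + Real.cos (2 * π * (x 2 + gfun a c t)))]
    set E := Real.exp (-β * t) * (2 * π) *
      (Real.sin (2 * π * (x 1 + gfun a c t)) + Real.cos (2 * π * (x 2 + gfun a c t)))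
    have h3 : |g1 a c t| - |E| ≤ |E - g1 a c t| := by
      have := abs_sub_abs_le_abs_sub (g1 a c t) E
      rw [abs_sub_comm] at this
      linarith
    linarith
  refine ⟨smooth_u, ?_, ?_, ?_, ?_, ?_, ?_, ?_⟩
  -- smoothness of p
  · have hsub : (Set.univ ×ˢ Set.Ico 0 a : Set ((Fin 3 → ℝ) × ℝ)) ⊆ Set.univ ×ˢ Set.Iio a :=
      Set.prod_mono (Set.Subset.rfl) Set.Ico_subset_Iio_self
    apply ((cd_pslice a c β).mono hsub).congr
    intro q hq
    rw [hp, deriv_deriv_gfun a c hq.2.2]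
  -- Navier-Stokes
  · intro x t ht i
    have hta : t ≠ a := ne_of_lt ht.2
    have hexp : Real.exp (-(2 * β) * t) = Real.exp (-β * t) * Real.exp (-β * t) := by
      rw [← Real.exp_add]; exact congrArg Real.exp (by ring)
    have hs0 : (fun y => u 0 y t) = fun y : Fin 3 → ℝ => Real.exp (-β * t) * (2 * π) *
        (Real.sin (2 * π * (y 1 + gfun a c t)) + Real.cos (2 * π * (y 2 + gfun a c t)))
        - deriv (gfun a c) t := funext fun y => hu0 y t
    have hs1 : (fun y => u 1 y t) = fun y : Fin 3 → ℝ => Real.exp (-β * t) * (2 * π) *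
        (Real.sin (2 * π * (y 2 + gfun a c t)) + Real.cos (2 * π * (y 0 + gfun a c t)))
        - deriv (gfun a c) t := funext fun y => hu1 y t
    have hs2 : (fun y => u 2 y t) = fun y : Fin 3 → ℝ => Real.exp (-β * t) * (2 * π) *
        (Real.sin (2 * π * (y 0 + gfun a c t)) + Real.cos (2 * π * (y 1 + gfun a c t)))
        - deriv (gfun a c) t := funext fun y => hu2 y t
    have hsp : (fun y => p y t) = fun y : Fin 3 → ℝ =>
        -(Real.exp (-(2 * β) * t)) * (2 * π) ^ 2 *
        (Real.sin (2 * π * (y 0 + gfun a c t)) * Real.cos (2 * π * (y 1 + gfun a c t)) +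
         Real.sin (2 * π * (y 1 + gfun a c t)) * Real.cos (2 * π * (y 2 + gfun a c t)) +
         Real.sin (2 * π * (y 2 + gfun a c t)) * Real.cos (2 * π * (y 0 + gfun a c t))) +
        deriv (deriv (gfun a c)) t * (y 0 + y 1 + y 2) := funext fun y => hp y t
    have ns0 : td (u 0 x) t + ∑ j : Fin 3, u j x t * pd (fun y => u 0 y t) j x =
        ν * lap (fun y => u 0 y t) x - pd (fun y => p y t) 0 x := by
      have htd := (hasDerivAt_tslice a c β (x 1) (x 2) ht.2).hasDerivWithinAt.derivWithin
        ((uniqueDiffOn_Ici 0) t ht.1)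
      rw [Fin.sum_univ_three, hu0 x t, hu1 x t, hu2 x t, hs0, hsp]
      unfold td
      rw [show u 0 x = (fun s => Real.exp (-β * s) * (2 * π) *
        (Real.sin (2 * π * (x 1 + gfun a c s)) + Real.cos (2 * π * (x 2 + gfun a c s)))
        - deriv (gfun a c) s) from funext fun s => hu0 x s]
      rw [htd]
      simp only [pd_slice, lap_slice, pd_pslice]
      rw [deriv_gfun a c hta, deriv_deriv_gfun a c ht.2, hexp, hβ]
      norm_num [Fin.ext_iff]
      ring
    have ns1 : td (u 1 x) t + ∑ j : Fin 3, u j x t * pd (fun y => u 1 y t) j x =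
        ν * lap (fun y => u 1 y t) x - pd (fun y => p y t) 1 x := by
      have htd := (hasDerivAt_tslice a c β (x 2) (x 0) ht.2).hasDerivWithinAt.derivWithin
        ((uniqueDiffOn_Ici 0) t ht.1)
      rw [Fin.sum_univ_three, hu0 x t, hu1 x t, hu2 x t, hs1, hsp]
      unfold td
      rw [show u 1 x = (fun s => Real.exp (-β * s) * (2 * π) *
        (Real.sin (2 * π * (x 2 + gfun a c s)) + Real.cos (2 * π * (x 0 + gfun a c s)))
        - deriv (gfun a c) s) from funext fun s => hu1 x s]
      rw [htd]
      simp only [pd_slice, lap_slice, pd_pslice]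
      rw [deriv_gfun a c hta, deriv_deriv_gfun a c ht.2, hexp, hβ]
      norm_num [Fin.ext_iff]
      ring
    have ns2 : td (u 2 x) t + ∑ j : Fin 3, u j x t * pd (fun y => u 2 y t) j x =
        ν * lap (fun y => u 2 y t) x - pd (fun y => p y t) 2 x := by
      have htd := (hasDerivAt_tslice a c β (x 0) (x 1) ht.2).hasDerivWithinAt.derivWithin
        ((uniqueDiffOn_Ici 0) t ht.1)
      rw [Fin.sum_univ_three, hu0 x t, hu1 x t, hu2 x t, hs2, hsp]
      unfold td
      rw [show u 2 x = (fun s => Real.exp (-β * s) * (2 * π) *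
        (Real.sin (2 * π * (x 0 + gfun a c s)) + Real.cos (2 * π * (x 1 + gfun a c s)))
        - deriv (gfun a c) s) from funext fun s => hu2 x s]
      rw [htd]
      simp only [pd_slice, lap_slice, pd_pslice]
      rw [deriv_gfun a c hta, deriv_deriv_gfun a c ht.2, hexp, hβ]
      norm_num [Fin.ext_iff]
      ring
    fin_cases i
    · exact ns0
    · exact ns1
    · exact ns2
  -- divergence free
  · intro x t ht
    have hs0 : (fun y => u 0 y t) = fun y : Fin 3 → ℝ => Real.exp (-β * t) * (2 * π) *
        (Real.sin (2 * π * (y 1 + gfun a c t)) + Real.cos (2 * π * (y 2 + gfun a c t)))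
        - deriv (gfun a c) t := funext fun y => hu0 y t
    have hs1 : (fun y => u 1 y t) = fun y : Fin 3 → ℝ => Real.exp (-β * t) * (2 * π) *
        (Real.sin (2 * π * (y 2 + gfun a c t)) + Real.cos (2 * π * (y 0 + gfun a c t)))
        - deriv (gfun a c) t := funext fun y => hu1 y t
    have hs2 : (fun y => u 2 y t) = fun y : Fin 3 → ℝ => Real.exp (-β * t) * (2 * π) *
        (Real.sin (2 * π * (y 0 + gfun a c t)) + Real.cos (2 * π * (y 1 + gfun a c t)))
        - deriv (gfun a c) t := funext fun y => hu2 y t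
    rw [Fin.sum_univ_three, hs0, hs1, hs2]
    simp only [pd_slice]
    norm_num [Fin.ext_iff]
  -- initial condition
  · intro x
    have hd0 : deriv (gfun a c) 0 = 0 := by
      rw [deriv_gfun a c (ne_of_lt ha)]
      simp [g1]
    have hg0 : gfun a c 0 = 0 := by simp [gfun]
    refine ⟨?_, ?_, ?_⟩
    · rw [hu0, hd0, hg0]; simp; ring
    · rw [hu1, hd0, hg0]; simp; ring
    · rw [hu2, hd0, hg0]; simp; ring
  -- periodicity
  · have per0 : ∀ (x : Fin 3 → ℝ) (t : ℝ) (j : Fin 3),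
        u 0 (x + Pi.single j 1) t = u 0 x t := by
      intro x t j
      rw [hu0, hu0]
      simp only [Pi.add_apply, Pi.single_apply]
      rw [sin_shift, cos_shift]
    have per1 : ∀ (x : Fin 3 → ℝ) (t : ℝ) (j : Fin 3),
        u 1 (x + Pi.single j 1) t = u 1 x t := by
      intro x t j
      rw [hu1, hu1]
      simp only [Pi.add_apply, Pi.single_apply]
      rw [sin_shift, cos_shift]
    have per2 : ∀ (x : Fin 3 → ℝ) (t : ℝ) (j : Fin 3),
        u 2 (x + Pi.single j 1) t = u 2 x t := by
      intro x t j
      rw [hu2, hu2]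
      simp only [Pi.add_apply, Pi.single_apply]
      rw [sin_shift, cos_shift]
    intro i x t ht j
    fin_cases i
    · exact per0 x t j
    · exact per1 x t j
    · exact per2 x t j
  -- blow-up
  · exact blowup
  -- no continuous extension
  · rintro ⟨v, hvcont, hveq⟩
    have hblow : Filter.Tendsto (fun t => |u 0 0 t|) (nhdsWithin a (Set.Iio a)) Filter.atTop :=
      blowup 0
    have hcont : ContinuousOn (fun t => v 0 0 t) (Set.Icc 0 a) := by
      have h1 : Continuous (fun t : ℝ => ((0 : Fin 3 → ℝ), t)) :=
        continuous_const.prodMk continuous_id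
      have h2 := (hvcont 0).comp h1.continuousOn
        (fun t ht => Set.mk_mem_prod (Set.mem_univ _) ht)
      exact h2
    have hmem : a ∈ Set.Icc (0:ℝ) a := Set.mem_Icc.2 ⟨le_of_lt ha, le_refl a⟩
    have h3 : Filter.Tendsto (fun t => v 0 0 t) (nhdsWithin a (Set.Ioo 0 a)) (nhds (v 0 0 a)) := by
      apply Filter.Tendsto.mono_left (hcont a hmem)
      exact nhdsWithin_mono a Set.Ioo_subset_Icc_self
    rw [nhdsWithin_Ioo_eq_nhdsLT ha] at h3
    have h4 : Filter.Tendsto (fun t => |u 0 0 t|) (nhdsWithin a (Set.Iio a))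
        (nhds (|v 0 0 a|)) := by
      apply Filter.Tendsto.congr' _ ((continuous_abs.tendsto _).comp h3)
      filter_upwards [Ioo_mem_nhdsLT_of_mem (Set.mem_Ioc.2 ⟨ha, le_refl a⟩)] with t ht
      simp only [Function.comp]
      rw [hveq 0 0 t (Set.mem_Ico.2 ⟨le_of_lt ht.1, ht.2⟩)]
    exact not_tendsto_nhds_of_tendsto_atTop hblow _ h4
end

section
/- Let ν > 0, let b₁,b₂,b₃ ∈ ℝ and nonzero α₁,α₂,α₃ ∈ ℝ satisfy Σ_{j=1}³ b_j/α_j = 0, and set β = −ν Σ_{j=1}³ 1/α_j². Let (c_n)_{n≥1} and (d_n)_{n≥1} be real sequences decaying faster than any power: for every K ∈ ℕ the sequence n^K(|c_n|+|d_n|) is bounded. Define u_i(x,t) = b_i Σ_{n=1}^∞ e^{βn²t}(c_n sin(n Σ_{j=1}³ x_j/α_j) + d_n cos(n Σ_{j=1}³ x_j/α_j)) for i = 1,2,3 and p(x,t) = 0. Then u is C^∞ on ℝ³ × [0,∞), satisfies Σ_{j=1}³ u_j ∂u_i/∂x_j = 0 and ∂u_i/∂t − ν Δu_i = 0 everywhere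 (hence solves the Navier–Stokes equations with zero force and pressure p = 0), div u = 0, and u(x,0) = u⁰(x) where u⁰_i(x) = b_i Σ_{n=1}^∞ (c_n sin(n Σ_j x_j/α_j) + d_n cos(n Σ_j x_j/α_j)). -/
open Real

open Set Filter Asymptotics

set_option maxHeartbeats 1000000


/-- Term-by-term differentiation of a series within a convex set. -/
theorem myHasFDerivWithinAt_tsum {E : Type*} [NormedAddCommGroup E] [NormedSpace ℝ E]
    {f : ℕ → E → ℝ} {f' : ℕ → E → E →L[ℝ] ℝ} {u : ℕ → ℝ} {s : Set E} {x : E}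
    (hs : Convex ℝ s) (hu : Summable u)
    (hf : ∀ n y, y ∈ s → HasFDerivWithinAt (f n) (f' n y) s y)
    (hf' : ∀ n y, y ∈ s → ‖f' n y‖ ≤ u n)
    (hsum : ∀ y ∈ s, Summable (fun n => f n y))
    (hx : x ∈ s) :
    HasFDerivWithinAt (fun y => ∑' n, f n y) (∑' n, f' n x) s x := by
  classical
  have hu0 : ∀ n, 0 ≤ u n := fun n => (norm_nonneg _).trans (hf' n x hx)
  have hL : Summable fun n => f' n x := Summable.of_norm_bounded hu (fun n => hf' n x hx)
  rw [hasFDerivWithinAt_iff_isLittleO, isLittleO_iff]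
  intro c hc
  obtain ⟨T, hT⟩ : ∃ T : Finset ℕ, ∑' n : {n : ℕ // n ∉ T}, u n < c / 4 := by
    have h0 := tendsto_tsum_compl_atTop_zero u
    exact ((tendsto_order.1 h0).2 _ (by linarith)).exists
  have hut : Summable fun n : {n : ℕ // n ∉ T} => u n := hu.subtype _
  have htu0 : 0 ≤ ∑' n : {n : ℕ // n ∉ T}, u n := tsum_nonneg fun n => hu0 n
  have htail_le : ∀ (g : ℕ → ℝ) (C : ℝ), 0 ≤ C → (∀ n, ‖g n‖ ≤ u n * C) →
      ‖∑' n : {n : ℕ // n ∉ T}, g n‖ ≤ (∑' n : {n : ℕ // n ∉ T}, u n) * C := by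
    intro g C hC hg
    have hsn : Summable fun n : {n : ℕ // n ∉ T} => ‖g n‖ :=
      Summable.of_nonneg_of_le (fun _ => norm_nonneg _) (fun n => hg n) (hut.mul_right C)
    calc ‖∑' n : {n : ℕ // n ∉ T}, g n‖ ≤ ∑' n : {n : ℕ // n ∉ T}, ‖g n‖ :=
          norm_tsum_le_tsum_norm hsn
      _ ≤ ∑' n : {n : ℕ // n ∉ T}, u n * C := Summable.tsum_le_tsum (fun n => hg n) hsn (hut.mul_right C)
      _ = (∑' n : {n : ℕ // n ∉ T}, u n) * C := tsum_mul_right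
  -- the finite part
  have hg : HasFDerivWithinAt (fun y => ∑ n ∈ T, f n y) (∑ n ∈ T, f' n x) s x :=
    HasFDerivWithinAt.fun_sum (fun n _ => hf n x hx)
  have ev1 : ∀ᶠ y in nhdsWithin x s,
      ‖(∑ n ∈ T, f n y) - (∑ n ∈ T, f n x) - (∑ n ∈ T, f' n x) (y - x)‖ ≤ c / 2 * ‖y - x‖ :=
    isLittleO_iff.1 hg.isLittleO (by linarith)
  filter_upwards [ev1, self_mem_nhdsWithin] with y h1 hys
  -- tail bounds
  have key : ∀ n, ‖f n y - f n x‖ ≤ u n * ‖y - x‖ := fun n =>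
    hs.norm_image_sub_le_of_norm_hasFDerivWithin_le (fun z hz => hf n z hz)
      (fun z hz => hf' n z hz) hx hys
  have hRy : Summable fun n : {n : ℕ // n ∉ T} => f n y := (hsum y hys).subtype _
  have hRx : Summable fun n : {n : ℕ // n ∉ T} => f n x := (hsum x hx).subtype _
  have hdiff : (∑' n : {n : ℕ // n ∉ T}, f n y) - (∑' n : {n : ℕ // n ∉ T}, f n x)
      = ∑' n : {n : ℕ // n ∉ T}, (f n y - f n x) := (Summable.tsum_sub hRy hRx).symm
  have hR1 : ‖(∑' n : {n : ℕ // n ∉ T}, f n y) - (∑' n : {n : ℕ // n ∉ T}, f n x)‖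
      ≤ (∑' n : {n : ℕ // n ∉ T}, u n) * ‖y - x‖ := by
    rw [hdiff]
    exact htail_le _ _ (norm_nonneg _) (fun n => key n)
  have hR'norm : ‖∑' n : {n : ℕ // n ∉ T}, f' n x‖ ≤ ∑' n : {n : ℕ // n ∉ T}, u n := by
    have hsn : Summable fun n : {n : ℕ // n ∉ T} => ‖f' n x‖ :=
      Summable.of_nonneg_of_le (fun _ => norm_nonneg _) (fun n => hf' n x hx) hut
    calc ‖∑' n : {n : ℕ // n ∉ T}, f' n x‖ ≤ ∑' n : {n : ℕ // n ∉ T}, ‖f' n x‖ :=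
          norm_tsum_le_tsum_norm hsn
      _ ≤ _ := Summable.tsum_le_tsum (fun n => hf' n x hx) hsn hut
  have hR2 : ‖(∑' n : {n : ℕ // n ∉ T}, f' n x) (y - x)‖
      ≤ (∑' n : {n : ℕ // n ∉ T}, u n) * ‖y - x‖ :=
    le_trans (ContinuousLinearMap.le_opNorm _ _)
      (mul_le_mul_of_nonneg_right hR'norm (norm_nonneg _))
  -- decompose
  have hdy := (Summable.sum_add_tsum_subtype_compl (hsum y hys) T).symm
  have hdx := (Summable.sum_add_tsum_subtype_compl (hsum x hx) T).symm
  have hdL := (Summable.sum_add_tsum_subtype_compl hL T).symm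
  rw [hdy, hdx, hdL]
  have expand : (∑ n ∈ T, f n y) + (∑' n : {n : ℕ // n ∉ T}, f n y)
        - ((∑ n ∈ T, f n x) + (∑' n : {n : ℕ // n ∉ T}, f n x))
        - ((∑ n ∈ T, f' n x) + (∑' n : {n : ℕ // n ∉ T}, f' n x)) (y - x)
      = ((∑ n ∈ T, f n y) - (∑ n ∈ T, f n x) - (∑ n ∈ T, f' n x) (y - x))
        + (((∑' n : {n : ℕ // n ∉ T}, f n y) - (∑' n : {n : ℕ // n ∉ T}, f n x))
            - (∑' n : {n : ℕ // n ∉ T}, f' n x) (y - x)) := by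
    simp only [ContinuousLinearMap.add_apply]; ring
  rw [expand]
  have hfinal := norm_add_le (((∑ n ∈ T, f n y) - (∑ n ∈ T, f n x) - (∑ n ∈ T, f' n x) (y - x)))
    ((((∑' n : {n : ℕ // n ∉ T}, f n y) - (∑' n : {n : ℕ // n ∉ T}, f n x))
            - (∑' n : {n : ℕ // n ∉ T}, f' n x) (y - x)))
  have hsub := norm_sub_le (((∑' n : {n : ℕ // n ∉ T}, f n y) - (∑' n : {n : ℕ // n ∉ T}, f n x)))
    ((∑' n : {n : ℕ // n ∉ T}, f' n x) (y - x))
  have hyx : (0:ℝ) ≤ ‖y - x‖ := norm_nonneg _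
  nlinarith [mul_le_mul_of_nonneg_right hT.le hyx]

noncomputable section NS

/-- The general term of the series. -/
def hterm (β : ℝ) (a e : ℕ → ℝ) (n : ℕ) (p : ℝ × ℝ) : ℝ :=
  Real.exp (β * ((n : ℝ) + 1) ^ 2 * p.1) *
    (a n * Real.sin (((n : ℝ) + 1) * p.2) + e n * Real.cos (((n : ℝ) + 1) * p.2))

/-- The series `H(t,s) = Σ e^{β(n+1)²t}(aₙ sin((n+1)s) + eₙ cos((n+1)s))`. -/
def Hser (β : ℝ) (a e : ℕ → ℝ) (p : ℝ × ℝ) : ℝ := ∑' n : ℕ, hterm β a e n p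

/-- Rapid decay of coefficients. -/
def Dec (a e : ℕ → ℝ) : Prop :=
  ∀ K : ℕ, ∃ M : ℝ, ∀ n : ℕ, ((n : ℝ) + 1) ^ K * (|a n| + |e n|) ≤ M

/-- time-derivative coefficients -/
def dtc (β : ℝ) (a : ℕ → ℝ) : ℕ → ℝ := fun n => β * ((n : ℝ) + 1) ^ 2 * a n
/-- space-derivative sine coefficients -/
def ds1 (e : ℕ → ℝ) : ℕ → ℝ := fun n => -(((n : ℝ) + 1) * e n)
/-- space-derivative cosine coefficients -/
def ds2 (a : ℕ → ℝ) : ℕ → ℝ := fun n => ((n : ℝ) + 1) * a n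

theorem Dec.summable {a e : ℕ → ℝ} (h : Dec a e) (k : ℕ) :
    Summable (fun n : ℕ => ((n : ℝ) + 1) ^ k * (|a n| + |e n|)) := by
  obtain ⟨M, hM⟩ := h (k + 2)
  have hbase : Summable (fun n : ℕ => 1 / ((n : ℝ) + 1) ^ 2) := by
    have h1 : Summable (fun n : ℕ => 1 / (n : ℝ) ^ 2) :=
      Real.summable_one_div_nat_pow.2 one_lt_two
    have := (summable_nat_add_iff (f := fun n : ℕ => 1 / (n : ℝ) ^ 2) 1).2 h1
    refine this.congr fun n => ?_
    push_cast
    ring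
  refine Summable.of_nonneg_of_le (fun n => by positivity) (fun n => ?_) (hbase.mul_left M)
  have hpos : (0 : ℝ) < ((n : ℝ) + 1) ^ 2 := by positivity
  rw [mul_one_div, le_div_iff₀ hpos]
  calc ((n : ℝ) + 1) ^ k * (|a n| + |e n|) * ((n : ℝ) + 1) ^ 2
      = ((n : ℝ) + 1) ^ (k + 2) * (|a n| + |e n|) := by ring
    _ ≤ M := hM n

theorem Dec.summable0 {a e : ℕ → ℝ} (h : Dec a e) : Summable (fun n : ℕ => |a n| + |e n|) := by
  simpa using h.summable 0

theorem Dec.dt {a e : ℕ → ℝ} (β : ℝ) (h : Dec a e) : Dec (dtc β a) (dtc β e) := by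
  intro K
  obtain ⟨M, hM⟩ := h (K + 2)
  refine ⟨|β| * M, fun n => ?_⟩
  have hsq : (0 : ℝ) ≤ ((n : ℝ) + 1) ^ 2 := by positivity
  have h1 : ((n : ℝ) + 1) ^ K * (|dtc β a n| + |dtc β e n|)
      = |β| * (((n : ℝ) + 1) ^ (K + 2) * (|a n| + |e n|)) := by
    simp only [dtc, abs_mul, abs_of_nonneg hsq]
    ring
  rw [h1]
  exact mul_le_mul_of_nonneg_left (hM n) (abs_nonneg β)

theorem Dec.ds {a e : ℕ → ℝ} (h : Dec a e) : Dec (ds1 e) (ds2 a) := by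
  intro K
  obtain ⟨M, hM⟩ := h (K + 1)
  refine ⟨M, fun n => ?_⟩
  have hn1 : (0 : ℝ) ≤ (n : ℝ) + 1 := by positivity
  have h1 : ((n : ℝ) + 1) ^ K * (|ds1 e n| + |ds2 a n|)
      = ((n : ℝ) + 1) ^ (K + 1) * (|a n| + |e n|) := by
    simp only [ds1, ds2, abs_neg, abs_mul, abs_of_nonneg hn1]
    ring
  rw [h1]
  exact hM n

theorem hterm_bound {β : ℝ} {a e : ℕ → ℝ} (hβ : β ≤ 0) (n : ℕ) {p : ℝ × ℝ} (hp : 0 ≤ p.1) :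
    ‖hterm β a e n p‖ ≤ |a n| + |e n| := by
  have hexp : Real.exp (β * ((n : ℝ) + 1) ^ 2 * p.1) ≤ 1 := by
    apply Real.exp_le_one_iff.2
    have h2 : (0 : ℝ) ≤ ((n : ℝ) + 1) ^ 2 * p.1 := by positivity
    calc β * ((n : ℝ) + 1) ^ 2 * p.1 = β * (((n : ℝ) + 1) ^ 2 * p.1) := by ring
      _ ≤ 0 := mul_nonpos_of_nonpos_of_nonneg hβ h2
  have htrig : |a n * Real.sin (((n : ℝ) + 1) * p.2) + e n * Real.cos (((n : ℝ) + 1) * p.2)|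
      ≤ |a n| + |e n| := by
    calc |a n * Real.sin (((n : ℝ) + 1) * p.2) + e n * Real.cos (((n : ℝ) + 1) * p.2)|
        ≤ |a n * Real.sin (((n : ℝ) + 1) * p.2)| + |e n * Real.cos (((n : ℝ) + 1) * p.2)| :=
          abs_add_le _ _
      _ ≤ |a n| * 1 + |e n| * 1 := by
          rw [abs_mul, abs_mul]
          gcongr
          · exact Real.abs_sin_le_one _
          · exact Real.abs_cos_le_one _
      _ = |a n| + |e n| := by ring
  rw [hterm, Real.norm_eq_abs, abs_mul, Real.abs_exp]
  calc Real.exp (β * ((n : ℝ) + 1) ^ 2 * p.1) *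
        |a n * Real.sin (((n : ℝ) + 1) * p.2) + e n * Real.cos (((n : ℝ) + 1) * p.2)|
      ≤ 1 * (|a n| + |e n|) := by
        apply mul_le_mul hexp htrig (abs_nonneg _) zero_le_one
    _ = |a n| + |e n| := one_mul _

theorem hterm_summable {β : ℝ} {a e : ℕ → ℝ} (hβ : β ≤ 0) (h : Dec a e) {p : ℝ × ℝ}
    (hp : 0 ≤ p.1) : Summable (fun n : ℕ => hterm β a e n p) :=
  Summable.of_norm_bounded h.summable0 (fun n => hterm_bound hβ n hp)


/-- The full derivative of the general term. -/
def htermD (β : ℝ) (a e : ℕ → ℝ) (n : ℕ) (p : ℝ × ℝ) : ℝ × ℝ →L[ℝ] ℝ :=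
  hterm β (dtc β a) (dtc β e) n p • ContinuousLinearMap.fst ℝ ℝ ℝ
    + hterm β (ds1 e) (ds2 a) n p • ContinuousLinearMap.snd ℝ ℝ ℝ

theorem hterm_hasFDerivAt (β : ℝ) (a e : ℕ → ℝ) (n : ℕ) (p : ℝ × ℝ) :
    HasFDerivAt (hterm β a e n) (htermD β a e n p) p := by
  have h1 : HasFDerivAt (fun q : ℝ × ℝ => β * ((n : ℝ) + 1) ^ 2 * q.1)
      ((β * ((n : ℝ) + 1) ^ 2) • ContinuousLinearMap.fst ℝ ℝ ℝ) p :=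
    hasFDerivAt_fst.const_mul _
  have hexp : HasFDerivAt (fun q : ℝ × ℝ => Real.exp (β * ((n : ℝ) + 1) ^ 2 * q.1))
      (Real.exp (β * ((n : ℝ) + 1) ^ 2 * p.1) •
        ((β * ((n : ℝ) + 1) ^ 2) • ContinuousLinearMap.fst ℝ ℝ ℝ)) p :=
    (Real.hasDerivAt_exp _).comp_hasFDerivAt p h1
  have h2 : HasFDerivAt (fun q : ℝ × ℝ => ((n : ℝ) + 1) * q.2)
      (((n : ℝ) + 1) • ContinuousLinearMap.snd ℝ ℝ ℝ) p :=
    hasFDerivAt_snd.const_mul _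
  have hsin : HasFDerivAt (fun q : ℝ × ℝ => Real.sin (((n : ℝ) + 1) * q.2))
      (Real.cos (((n : ℝ) + 1) * p.2) • (((n : ℝ) + 1) • ContinuousLinearMap.snd ℝ ℝ ℝ)) p :=
    (Real.hasDerivAt_sin _).comp_hasFDerivAt p h2
  have hcos : HasFDerivAt (fun q : ℝ × ℝ => Real.cos (((n : ℝ) + 1) * q.2))
      ((-Real.sin (((n : ℝ) + 1) * p.2)) • (((n : ℝ) + 1) • ContinuousLinearMap.snd ℝ ℝ ℝ)) p :=
    (Real.hasDerivAt_cos _).comp_hasFDerivAt p h2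
  have htrig := (hsin.const_mul (a n)).add (hcos.const_mul (e n))
  have hmul := hexp.mul htrig
  refine hmul.congr_fderiv ?_
  refine ContinuousLinearMap.ext fun v => ?_
  simp only [htermD, hterm, dtc, ds1, ds2, ContinuousLinearMap.add_apply, Pi.add_apply,
    ContinuousLinearMap.smul_apply, ContinuousLinearMap.coe_fst', ContinuousLinearMap.coe_snd',
    smul_eq_mul]
  ring

theorem htermD_bound {β : ℝ} {a e : ℕ → ℝ} (hβ : β ≤ 0) (n : ℕ) {p : ℝ × ℝ} (hp : 0 ≤ p.1) :
    ‖htermD β a e n p‖ ≤ (|β| + 1) * (((n : ℝ) + 1) ^ 2 * (|a n| + |e n|)) := by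
  have hfst : ‖ContinuousLinearMap.fst ℝ ℝ ℝ‖ ≤ 1 :=
    ContinuousLinearMap.opNorm_le_bound _ zero_le_one fun v => by
      simpa using norm_fst_le v
  have hsnd : ‖ContinuousLinearMap.snd ℝ ℝ ℝ‖ ≤ 1 :=
    ContinuousLinearMap.opNorm_le_bound _ zero_le_one fun v => by
      simpa using norm_snd_le v
  have hA : ‖hterm β (dtc β a) (dtc β e) n p‖ ≤ |β| * (((n : ℝ) + 1) ^ 2 * (|a n| + |e n|)) := by
    refine (hterm_bound hβ n hp).trans ?_
    have hsq : (0 : ℝ) ≤ ((n : ℝ) + 1) ^ 2 := by positivity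
    simp only [dtc, abs_mul, abs_of_nonneg hsq]
    nlinarith [abs_nonneg β, abs_nonneg (a n), abs_nonneg (e n)]
  have hB : ‖hterm β (ds1 e) (ds2 a) n p‖ ≤ ((n : ℝ) + 1) ^ 2 * (|a n| + |e n|) := by
    refine (hterm_bound hβ n hp).trans ?_
    have hn1 : (0 : ℝ) ≤ (n : ℝ) + 1 := by positivity
    have hn2 : (1 : ℝ) ≤ (n : ℝ) + 1 := by
      have : (0:ℝ) ≤ (n:ℝ) := Nat.cast_nonneg n
      linarith
    simp only [ds1, ds2, abs_neg, abs_mul, abs_of_nonneg hn1]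
    nlinarith [mul_nonneg (mul_nonneg hn1 (sub_nonneg.2 hn2))
      (add_nonneg (abs_nonneg (a n)) (abs_nonneg (e n)))]
  set A := hterm β (dtc β a) (dtc β e) n p with hAdef
  set B := hterm β (ds1 e) (ds2 a) n p with hBdef
  rw [Real.norm_eq_abs] at hA hB
  refine ContinuousLinearMap.opNorm_le_bound _ (by positivity) fun v => ?_
  have hv1 : |v.1| ≤ ‖v‖ := by rw [← Real.norm_eq_abs]; exact norm_fst_le v
  have hv2 : |v.2| ≤ ‖v‖ := by rw [← Real.norm_eq_abs]; exact norm_snd_le v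
  have hvn : (0:ℝ) ≤ ‖v‖ := norm_nonneg v
  simp only [htermD, ContinuousLinearMap.add_apply, ContinuousLinearMap.smul_apply,
    ContinuousLinearMap.coe_fst', ContinuousLinearMap.coe_snd', smul_eq_mul, Real.norm_eq_abs,
    ← hAdef, ← hBdef]
  calc |A * v.1 + B * v.2| ≤ |A| * |v.1| + |B| * |v.2| := by
        refine (abs_add_le _ _).trans ?_
        rw [abs_mul, abs_mul]
    _ ≤ (|β| + 1) * (((n : ℝ) + 1) ^ 2 * (|a n| + |e n|)) * ‖v‖ := by
        nlinarith [abs_nonneg A, abs_nonneg B, mul_le_mul hA hv1 (abs_nonneg _) ((abs_nonneg A).trans hA),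
          mul_le_mul hB hv2 (abs_nonneg _) ((abs_nonneg B).trans hB)]


def sH : Set (ℝ × ℝ) := Set.Ici (0 : ℝ) ×ˢ (Set.univ : Set ℝ)

theorem sH_convex : Convex ℝ sH := (convex_Ici 0).prod convex_univ

theorem sH_uniqueDiffOn : UniqueDiffOn ℝ sH := (uniqueDiffOn_Ici 0).prod uniqueDiffOn_univ

theorem mem_sH {p : ℝ × ℝ} : p ∈ sH ↔ 0 ≤ p.1 := by
  simp [sH]

theorem Hser_hasFDerivWithinAt {β : ℝ} {a e : ℕ → ℝ} (hβ : β ≤ 0) (h : Dec a e) {p : ℝ × ℝ}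
    (hp : p ∈ sH) :
    HasFDerivWithinAt (Hser β a e)
      (Hser β (dtc β a) (dtc β e) p • ContinuousLinearMap.fst ℝ ℝ ℝ
        + Hser β (ds1 e) (ds2 a) p • ContinuousLinearMap.snd ℝ ℝ ℝ) sH p := by
  have hu : Summable (fun n : ℕ => (|β| + 1) * (((n : ℝ) + 1) ^ 2 * (|a n| + |e n|))) :=
    (h.summable 2).mul_left _
  have hmain := myHasFDerivWithinAt_tsum (f := hterm β a e) (f' := htermD β a e)
    sH_convex hu
    (fun n q hq => (hterm_hasFDerivAt β a e n q).hasFDerivWithinAt)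
    (fun n q hq => htermD_bound hβ n (mem_sH.1 hq))
    (fun q hq => hterm_summable hβ h (mem_sH.1 hq)) hp
  have hsA : Summable (fun n : ℕ => hterm β (dtc β a) (dtc β e) n p) :=
    hterm_summable hβ (h.dt β) (mem_sH.1 hp)
  have hsB : Summable (fun n : ℕ => hterm β (ds1 e) (ds2 a) n p) :=
    hterm_summable hβ h.ds (mem_sH.1 hp)
  have hrw : (∑' n, htermD β a e n p)
      = Hser β (dtc β a) (dtc β e) p • ContinuousLinearMap.fst ℝ ℝ ℝ
        + Hser β (ds1 e) (ds2 a) p • ContinuousLinearMap.snd ℝ ℝ ℝ := by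
    rw [Hser, Hser, ← Summable.tsum_smul_const hsA, ← Summable.tsum_smul_const hsB,
      ← Summable.tsum_add (hsA.smul_const _) (hsB.smul_const _)]
    rfl
  rw [← hrw]
  exact hmain

theorem Hser_continuousOn {β : ℝ} {a e : ℕ → ℝ} (hβ : β ≤ 0) (h : Dec a e) :
    ContinuousOn (Hser β a e) sH := by
  refine (tendstoUniformlyOn_tsum h.summable0
    (fun n q hq => hterm_bound hβ n (mem_sH.1 hq))).continuousOn
    (Filter.Frequently.of_forall fun T => ?_)
  refine continuousOn_finset_sum _ fun n _ => Continuous.continuousOn ?_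
  unfold hterm
  fun_prop

theorem Hser_contDiffOn {β : ℝ} (hβ : β ≤ 0) (N : ℕ) :
    ∀ a e : ℕ → ℝ, Dec a e → ContDiffOn ℝ N (Hser β a e) sH := by
  induction N with
  | zero =>
    intro a e h
    simpa [contDiffOn_zero] using Hser_continuousOn hβ h
  | succ N ih =>
    intro a e h
    have hcast : ((N + 1 : ℕ) : WithTop ℕ∞) = (N : WithTop ℕ∞) + 1 := by
      push_cast
      rfl
    rw [hcast, contDiffOn_succ_iff_fderivWithin sH_uniqueDiffOn]
    refine ⟨fun p hp => (Hser_hasFDerivWithinAt hβ h hp).differentiableWithinAt, ?_, ?_⟩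
    · intro hN
      exact absurd hN (by simp)
    · refine ContDiffOn.congr ?_
        (fun p hp => (Hser_hasFDerivWithinAt hβ h hp).fderivWithin (sH_uniqueDiffOn p hp))
      exact ((ih _ _ (h.dt β)).smul contDiffOn_const).add ((ih _ _ h.ds).smul contDiffOn_const)


theorem Hser_hasDerivAt_snd {β : ℝ} {a e : ℕ → ℝ} (hβ : β ≤ 0) (h : Dec a e) {t : ℝ}
    (ht : 0 ≤ t) (σ : ℝ) :
    HasDerivAt (fun z => Hser β a e (t, z)) (Hser β (ds1 e) (ds2 a) (t, σ)) σ := by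
  have hg : ∀ (n : ℕ) (z : ℝ),
      HasDerivAt (fun z => hterm β a e n (t, z)) (hterm β (ds1 e) (ds2 a) n (t, z)) z := by
    intro n z
    have hz : HasDerivAt (fun z : ℝ => ((n : ℝ) + 1) * z) ((n : ℝ) + 1) z := by
      simpa using (hasDerivAt_id z).const_mul ((n : ℝ) + 1)
    have hsin : HasDerivAt (fun z => Real.sin (((n : ℝ) + 1) * z))
        (Real.cos (((n : ℝ) + 1) * z) * ((n : ℝ) + 1)) z := (Real.hasDerivAt_sin _).comp z hz
    have hcos : HasDerivAt (fun z => Real.cos (((n : ℝ) + 1) * z))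
        (-Real.sin (((n : ℝ) + 1) * z) * ((n : ℝ) + 1)) z := (Real.hasDerivAt_cos _).comp z hz
    have hall := ((hsin.const_mul (a n)).add (hcos.const_mul (e n))).const_mul
      (Real.exp (β * ((n : ℝ) + 1) ^ 2 * t))
    refine hall.congr_deriv ?_
    simp only [hterm, ds1, ds2]
    ring
  have hres := hasDerivAt_tsum (u := fun n => |ds1 e n| + |ds2 a n|)
    (g := fun n z => hterm β a e n (t, z)) (g' := fun n z => hterm β (ds1 e) (ds2 a) n (t, z))
    (y₀ := 0) h.ds.summable0 hg
    (fun n z => hterm_bound hβ n (p := (t, z)) ht)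
    (hterm_summable hβ h (p := ((t : ℝ), (0 : ℝ))) ht) σ
  exact hres

theorem Hser_hasDerivWithinAt_fst {β : ℝ} {a e : ℕ → ℝ} (hβ : β ≤ 0) (h : Dec a e) (σ : ℝ)
    {t : ℝ} (ht : t ∈ Set.Ici (0 : ℝ)) :
    HasDerivWithinAt (fun r => Hser β a e (r, σ)) (Hser β (dtc β a) (dtc β e) (t, σ))
      (Set.Ici 0) t := by
  have hg : ∀ (n : ℕ) (r : ℝ),
      HasDerivAt (fun r => hterm β a e n (r, σ)) (hterm β (dtc β a) (dtc β e) n (r, σ)) r := by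
    intro n r
    have hlin : HasDerivAt (fun r : ℝ => β * ((n : ℝ) + 1) ^ 2 * r) (β * ((n : ℝ) + 1) ^ 2) r := by
      simpa using (hasDerivAt_id r).const_mul (β * ((n : ℝ) + 1) ^ 2)
    have hexp := (Real.hasDerivAt_exp _).comp r hlin
    have hall := hexp.mul_const
      (a n * Real.sin (((n : ℝ) + 1) * σ) + e n * Real.cos (((n : ℝ) + 1) * σ))
    refine hall.congr_deriv ?_
    simp only [hterm, dtc]
    ring
  have hAs : Summable (fun n : ℕ => hterm β (dtc β a) (dtc β e) n ((t : ℝ), σ)) :=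
    hterm_summable hβ (h.dt β) (p := (t, σ)) ht
  have hres := myHasFDerivWithinAt_tsum (s := Set.Ici (0 : ℝ))
    (f := fun n r => hterm β a e n (r, σ))
    (f' := fun n r => ContinuousLinearMap.smulRight (1 : ℝ →L[ℝ] ℝ)
      (hterm β (dtc β a) (dtc β e) n (r, σ)))
    (u := fun n => |dtc β a n| + |dtc β e n|)
    (convex_Ici 0) (h.dt β).summable0
    (fun n r hr => (hg n r).hasDerivWithinAt.hasFDerivWithinAt)
    (fun n r hr => by
      simpa only [ContinuousLinearMap.norm_smulRight_apply, norm_one, one_mul] using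
        hterm_bound hβ (a := dtc β a) (e := dtc β e) n (p := (r, σ)) hr)
    (fun r hr => hterm_summable hβ h (p := (r, σ)) hr) ht
  have hrw : (∑' n : ℕ, ContinuousLinearMap.smulRight (1 : ℝ →L[ℝ] ℝ)
        (hterm β (dtc β a) (dtc β e) n ((t : ℝ), σ)))
      = ContinuousLinearMap.smulRight (1 : ℝ →L[ℝ] ℝ)
        (Hser β (dtc β a) (dtc β e) ((t : ℝ), σ)) :=
    ((ContinuousLinearMap.smulRightL ℝ ℝ ℝ 1).map_tsum hAs).symm
  rw [hrw] at hres
  simpa [Hser] using hres.hasDerivWithinAt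

/-- The continuous linear functional `y ↦ ∑ yⱼ/αⱼ`. -/
def Slin (α : Fin 3 → ℝ) : (Fin 3 → ℝ) →L[ℝ] ℝ :=
  ∑ j : Fin 3, (α j)⁻¹ • ContinuousLinearMap.proj j

theorem Slin_apply (α : Fin 3 → ℝ) (y : Fin 3 → ℝ) : Slin α y = ∑ j : Fin 3, y j / α j := by
  rw [Slin, ContinuousLinearMap.sum_apply]
  refine Finset.sum_congr rfl fun j _ => ?_
  rw [ContinuousLinearMap.smul_apply, ContinuousLinearMap.proj_apply, smul_eq_mul,
    div_eq_mul_inv, mul_comm]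

theorem Slin_single (α : Fin 3 → ℝ) (j : Fin 3) : Slin α (Pi.single j 1) = (α j)⁻¹ := by
  rw [Slin_apply, Finset.sum_eq_single j]
  · rw [Pi.single_eq_same, one_div]
  · intro k _ hk
    rw [Pi.single_eq_of_ne hk, zero_div]
  · intro hj
    exact absurd (Finset.mem_univ j) hj

theorem pd_HserC {β : ℝ} {a e : ℕ → ℝ} {α : Fin 3 → ℝ} (hβ : β ≤ 0) (h : Dec a e) {t : ℝ}
    (ht : 0 ≤ t) (C : ℝ) (x : Fin 3 → ℝ) (j : Fin 3) :
    pd (fun y => C * Hser β a e (t, ∑ k : Fin 3, y k / α k)) j x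
      = (C * (α j)⁻¹) * Hser β (ds1 e) (ds2 a) (t, ∑ k : Fin 3, x k / α k) := by
  have hfun : (fun y : Fin 3 → ℝ => C * Hser β a e (t, ∑ k : Fin 3, y k / α k))
      = fun y => C * Hser β a e (t, Slin α y) := by
    funext y
    rw [Slin_apply]
  have hcomp : HasFDerivAt (fun y => C * Hser β a e (t, Slin α y))
      (C • (Hser β (ds1 e) (ds2 a) (t, Slin α x) • (Slin α))) x :=
    HasFDerivAt.const_mul
      ((Hser_hasDerivAt_snd hβ h ht (Slin α x)).comp_hasFDerivAt x (Slin α).hasFDerivAt) C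
  rw [pd, hfun, hcomp.fderiv]
  rw [ContinuousLinearMap.smul_apply, ContinuousLinearMap.smul_apply, Slin_single, smul_eq_mul,
    smul_eq_mul, Slin_apply]
  ring

theorem Hser_dtc_eq {β : ℝ} (a e : ℕ → ℝ) (p : ℝ × ℝ) :
    Hser β (dtc β a) (dtc β e) p = (-β) * Hser β (ds1 (ds2 a)) (ds2 (ds1 e)) p := by
  rw [Hser, Hser, ← tsum_mul_left]
  refine tsum_congr fun n => ?_
  simp only [hterm, dtc, ds1, ds2]
  ring
end NS

/-- Lemma 5: for rapidly decaying Fourier coefficients `(c_n)`, `(d_n)` (n ≥ 1),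
the series `u_i(x,t) = b_i Σ_{n≥1} e^{βn²t}(c_n sin(n Σ x_j/α_j) + d_n cos(n Σ x_j/α_j))`
with `Σ b_j/α_j = 0` and `β = −ν Σ 1/α_j²` is smooth, has vanishing transport
term and satisfies the heat equation, hence solves Navier–Stokes with zero
force and zero pressure, is divergence-free, and attains the series initial
data at `t = 0`. -/
theorem stmt9 (ν : ℝ) (hν : 0 < ν)
    (b α : Fin 3 → ℝ) (hα : ∀ j, α j ≠ 0)
    (hbα : ∑ j : Fin 3, b j / α j = 0)
    (β : ℝ) (hβ : β = -ν * ∑ j : Fin 3, 1 / (α j) ^ 2)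
    (c d : ℕ → ℝ)
    (hcd : ∀ K : ℕ, ∃ M : ℝ, ∀ n : ℕ, 1 ≤ n → (n : ℝ) ^ K * (|c n| + |d n|) ≤ M)
    (u : Fin 3 → (Fin 3 → ℝ) → ℝ → ℝ)
    (hu : ∀ i x t, u i x t =
      b i * ∑' n : ℕ, Real.exp (β * ((n : ℝ) + 1) ^ 2 * t) *
        (c (n + 1) * Real.sin (((n : ℝ) + 1) * ∑ j : Fin 3, x j / α j) +
         d (n + 1) * Real.cos (((n : ℝ) + 1) * ∑ j : Fin 3, x j / α j))) :
    -- smoothness on ℝ³ × [0,∞)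
    (∀ i : Fin 3, ContDiffOn ℝ (⊤ : ℕ∞)
      (fun q : (Fin 3 → ℝ) × ℝ => u i q.1 q.2) (Set.univ ×ˢ Set.Ici 0)) ∧
    -- the transport term vanishes
    (∀ x : Fin 3 → ℝ, ∀ t : ℝ, 0 ≤ t → ∀ i : Fin 3,
      ∑ j : Fin 3, u j x t * pd (fun y => u i y t) j x = 0) ∧
    -- the heat equation holds
    (∀ x : Fin 3 → ℝ, ∀ t : ℝ, 0 ≤ t → ∀ i : Fin 3,
      td (u i x) t - ν * lap (fun y => u i y t) x = 0) ∧
    -- hence Navier–Stokes with zero force and zero pressure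
    (∀ x : Fin 3 → ℝ, ∀ t : ℝ, 0 ≤ t → ∀ i : Fin 3,
      td (u i x) t + ∑ j : Fin 3, u j x t * pd (fun y => u i y t) j x =
        ν * lap (fun y => u i y t) x - pd (fun _ => (0 : ℝ)) i x) ∧
    -- divergence-free
    (∀ x : Fin 3 → ℝ, ∀ t : ℝ, 0 ≤ t →
      ∑ i : Fin 3, pd (fun y => u i y t) i x = 0) ∧
    -- initial condition
    (∀ x : Fin 3 → ℝ, ∀ i : Fin 3,
      u i x 0 = b i * ∑' n : ℕ,
        (c (n + 1) * Real.sin (((n : ℝ) + 1) * ∑ j : Fin 3, x j / α j) +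
         d (n + 1) * Real.cos (((n : ℝ) + 1) * ∑ j : Fin 3, x j / α j))) := by
  classical
  have hDec : Dec (fun n => c (n + 1)) (fun n => d (n + 1)) := by
    intro K
    obtain ⟨M, hM⟩ := hcd K
    refine ⟨M, fun n => ?_⟩
    have := hM (n + 1) (Nat.le_add_left 1 n)
    push_cast at this
    exact this
  have hsums : 0 ≤ ∑ j : Fin 3, 1 / (α j) ^ 2 :=
    Finset.sum_nonneg fun j _ => by positivity
  have hβ0 : β ≤ 0 := by rw [hβ]; nlinarith
  have hufun : ∀ i t, (fun y => u i y t)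
      = fun y => b i * Hser β (fun n => c (n + 1)) (fun n => d (n + 1))
          (t, ∑ k : Fin 3, y k / α k) := by
    intro i t
    funext y
    rw [hu]
    rfl
  have hufunT : ∀ i x, u i x
      = fun r => b i * Hser β (fun n => c (n + 1)) (fun n => d (n + 1))
          (r, ∑ k : Fin 3, x k / α k) := by
    intro i x
    funext r
    rw [hu]
    rfl
  -- spatial derivative of u i
  have hpdj : ∀ (x : Fin 3 → ℝ) (t : ℝ), 0 ≤ t → ∀ (i j : Fin 3),
      pd (fun y => u i y t) j x = (b i * (α j)⁻¹) *
        Hser β (ds1 fun n => d (n + 1)) (ds2 fun n => c (n + 1))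
          (t, ∑ k : Fin 3, x k / α k) := by
    intro x t ht i j
    rw [hufun i t]
    exact pd_HserC hβ0 hDec ht (b i) x j
  -- transport term
  have htrans : ∀ (x : Fin 3 → ℝ) (t : ℝ), 0 ≤ t → ∀ i : Fin 3,
      ∑ j : Fin 3, u j x t * pd (fun y => u i y t) j x = 0 := by
    intro x t ht i
    have hstep : ∑ j : Fin 3, u j x t * pd (fun y => u i y t) j x
        = ∑ j : Fin 3, (b j / α j) *
            (Hser β (fun n => c (n + 1)) (fun n => d (n + 1)) (t, ∑ k : Fin 3, x k / α k) *
              (b i * Hser β (ds1 fun n => d (n + 1)) (ds2 fun n => c (n + 1))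
                (t, ∑ k : Fin 3, x k / α k))) := by
      refine Finset.sum_congr rfl fun j _ => ?_
      rw [hpdj x t ht i j, hu j x t,
        show (b j : ℝ) * ∑' n : ℕ, Real.exp (β * ((n : ℝ) + 1) ^ 2 * t) *
          (c (n + 1) * Real.sin (((n : ℝ) + 1) * ∑ k : Fin 3, x k / α k) +
           d (n + 1) * Real.cos (((n : ℝ) + 1) * ∑ k : Fin 3, x k / α k))
          = b j * Hser β (fun n => c (n + 1)) (fun n => d (n + 1))
              (t, ∑ k : Fin 3, x k / α k) from rfl, div_eq_mul_inv]
      ring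
    rw [hstep, ← Finset.sum_mul, hbα, zero_mul]
  -- heat equation
  have hheat : ∀ (x : Fin 3 → ℝ) (t : ℝ), 0 ≤ t → ∀ i : Fin 3,
      td (u i x) t - ν * lap (fun y => u i y t) x = 0 := by
    intro x t ht i
    have htd : td (u i x) t = b i *
        Hser β (dtc β fun n => c (n + 1)) (dtc β fun n => d (n + 1))
          (t, ∑ k : Fin 3, x k / α k) := by
      rw [td, hufunT i x]
      exact HasDerivWithinAt.derivWithin
        (HasDerivWithinAt.const_mul (b i) (Hser_hasDerivWithinAt_fst hβ0 hDec _ ht))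
        (uniqueDiffOn_Ici 0 t ht)
    have hlap : lap (fun y => u i y t) x
        = (∑ j : Fin 3, (α j)⁻¹ * (α j)⁻¹) *
            (b i * Hser β (ds1 (ds2 fun n => c (n + 1))) (ds2 (ds1 fun n => d (n + 1)))
              (t, ∑ k : Fin 3, x k / α k)) := by
      rw [lap]
      have hstep : ∀ j : Fin 3, pd (pd (fun y => u i y t) j) j x
          = ((α j)⁻¹ * (α j)⁻¹) *
              (b i * Hser β (ds1 (ds2 fun n => c (n + 1))) (ds2 (ds1 fun n => d (n + 1)))
                (t, ∑ k : Fin 3, x k / α k)) := by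
        intro j
        have hfn : pd (fun y => u i y t) j
            = fun y => (b i * (α j)⁻¹) *
                Hser β (ds1 fun n => d (n + 1)) (ds2 fun n => c (n + 1))
                  (t, ∑ k : Fin 3, y k / α k) := by
          funext y
          rw [hufun i t]
          exact pd_HserC hβ0 hDec ht (b i) y j
        rw [hfn, pd_HserC hβ0 hDec.ds ht (b i * (α j)⁻¹) x j]
        ring
      rw [Finset.sum_congr rfl fun j _ => hstep j, ← Finset.sum_mul]
    rw [htd, hlap, Hser_dtc_eq]
    have hsum_eq : ∑ j : Fin 3, (α j)⁻¹ * (α j)⁻¹ = ∑ j : Fin 3, 1 / (α j) ^ 2 :=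
      Finset.sum_congr rfl fun j _ => by rw [one_div, sq, mul_inv]
    rw [hsum_eq, hβ]
    ring
  refine ⟨?_, htrans, hheat, ?_, ?_, ?_⟩
  · -- smoothness
    intro i
    set φ : ((Fin 3 → ℝ) × ℝ) →L[ℝ] ℝ × ℝ :=
      (ContinuousLinearMap.snd ℝ (Fin 3 → ℝ) ℝ).prod
        ((Slin α).comp (ContinuousLinearMap.fst ℝ (Fin 3 → ℝ) ℝ)) with hφ
    have hmaps : Set.MapsTo (⇑φ) (Set.univ ×ˢ Set.Ici 0) sH := by
      intro q hq
      simp only [hφ, ContinuousLinearMap.prod_apply, ContinuousLinearMap.coe_snd',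
        ContinuousLinearMap.coe_comp', Function.comp_apply, ContinuousLinearMap.coe_fst']
      exact mem_sH.2 hq.2
    have hsmooth : ∀ N : ℕ, ContDiffOn ℝ N
        (fun q : (Fin 3 → ℝ) × ℝ => u i q.1 q.2) (Set.univ ×ˢ Set.Ici 0) := by
      intro N
      have hH := Hser_contDiffOn hβ0 N (fun n => c (n + 1)) (fun n => d (n + 1)) hDec
      have hcomp := (contDiffOn_const (c := b i)).mul
        ((hH.comp (φ.contDiff.contDiffOn) hmaps))
      refine hcomp.congr fun q hq => ?_
      rw [hu]
      simp only [Function.comp_apply, hφ, ContinuousLinearMap.prod_apply,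
        ContinuousLinearMap.coe_snd', ContinuousLinearMap.coe_comp', Function.comp_apply,
        ContinuousLinearMap.coe_fst', Slin_apply]
      rfl
    exact contDiffOn_infty.2 hsmooth
  · -- Navier-Stokes
    intro x t ht i
    have hpd0 : pd (fun _ : Fin 3 → ℝ => (0 : ℝ)) i x = 0 := by
      simp [pd]
    rw [hpd0, htrans x t ht i, add_zero, sub_zero]
    have := hheat x t ht i
    linarith
  · -- divergence free
    intro x t ht
    have hstep : ∑ i : Fin 3, pd (fun y => u i y t) i x
        = ∑ i : Fin 3, (b i / α i) *
            Hser β (ds1 fun n => d (n + 1)) (ds2 fun n => c (n + 1))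
              (t, ∑ k : Fin 3, x k / α k) := by
      refine Finset.sum_congr rfl fun i _ => ?_
      rw [hpdj x t ht i i, div_eq_mul_inv]
    rw [hstep, ← Finset.sum_mul, hbα, zero_mul]
  · -- initial condition
    intro x i
    rw [hu]
    congr 1
    refine tsum_congr fun n => ?_
    rw [mul_zero, Real.exp_zero, one_mul]
end

section
/- For n = 1,2 let b_{i,n} ∈ ℝ and nonzero α_{i,n} ∈ ℝ (i = 1,2,3) satisfy Σ_{j=1}³ b_{j,n}/α_{j,n} = 0 for n = 1,2, together with b_{i,1}·Σ_{j=1}³ b_{j,2}/α_{j,1} = 1/α_{i,2} and b_{i,2}·Σ_{j=1}³ b_{j,1}/α_{j,2} = 1/α_{i,1} for i = 1,2,3. Then Σ_{j=1}³ 1/(α_{j,1}·α_{j,2}) = 0 and Σ_{j=1}³ 1/α_{j,1}² = Σ_{j=1}³ 1/α_{j,2}². -/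
/-- The compatibility conditions of the two-wave solution imply
`Σ_j 1/(α_{j,1}α_{j,2}) = 0` and `Σ_j 1/α_{j,1}² = Σ_j 1/α_{j,2}²`. -/
theorem stmt11
    (b α : Fin 3 → Fin 2 → ℝ) (hα : ∀ i n, α i n ≠ 0)
    (hbα : ∀ n : Fin 2, ∑ j : Fin 3, b j n / α j n = 0)
    (hc1 : ∀ i : Fin 3, b i 0 * ∑ j : Fin 3, b j 1 / α j 0 = 1 / α i 1)
    (hc2 : ∀ i : Fin 3, b i 1 * ∑ j : Fin 3, b j 0 / α j 1 = 1 / α i 0) :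
    (∑ j : Fin 3, 1 / (α j 0 * α j 1) = 0) ∧
    (∑ j : Fin 3, 1 / (α j 0) ^ 2 = ∑ j : Fin 3, 1 / (α j 1) ^ 2) := by
  set S1 := ∑ j : Fin 3, b j 1 / α j 0 with hS1
  set S2 := ∑ j : Fin 3, b j 0 / α j 1 with hS2
  constructor
  · have h : ∑ j : Fin 3, 1 / (α j 0 * α j 1)
        = S1 * ∑ j : Fin 3, b j 0 / α j 0 := by
      rw [Finset.mul_sum]
      refine Finset.sum_congr rfl fun j _ => ?_
      have h1 := hc1 j
      have := hα j 0
      have := hα j 1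
      field_simp at h1 ⊢
      linear_combination (-1 : ℝ) * h1
    rw [h, hbα 0, mul_zero]
  · have hA : ∑ j : Fin 3, 1 / (α j 0) ^ 2 = S2 * S1 := by
      rw [hS1, Finset.mul_sum]
      refine Finset.sum_congr rfl fun j _ => ?_
      have h2 := hc2 j
      have := hα j 0
      field_simp at h2 ⊢
      linear_combination (-1 : ℝ) * h2
    have hB : ∑ j : Fin 3, 1 / (α j 1) ^ 2 = S1 * S2 := by
      rw [hS2, Finset.mul_sum]
      refine Finset.sum_congr rfl fun j _ => ?_
      have h1 := hc1 j
      have := hα j 1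
      field_simp at h1 ⊢
      linear_combination (-1 : ℝ) * h1
    rw [hA, hB, mul_comm]
end

section
/- Let ν > 0, c ∈ ℝ, β = (2π)²ν, and define on ℝ³ × [0,∞): u₁(x,t) = e^{−βt}·2π(sin(2π(x₂+ct²/2)) + cos(2π(x₃+ct²/2))) − ct, with u₂ and u₃ given by cyclic permutation of the indices (1,2,3), and p(x,t) = −e^{−2βt}(2π)²[sin(2π(x₁+ct²/2))cos(2π(x₂+ct²/2)) + sin(2π(x₂+ct²/2))cos(2π(x₃+ct²/2)) + sin(2π(x₃+ct²/2))cos(2π(x₁+ct²/2))] + c(x₁+x₂+x₃). Then for every c ∈ ℝ the pair (u,p) is a C^∞ solution of the Navier–Stokes equations with zero external force, div u = 0, and initial data u⁰ given by u⁰₁(x) = 2π sin(2πx₂)+2π cos(2πx₃) and its cyclic permutations; if c ≠ 0 then each u_i and p are unbounded on ℝ³ × [0,∞), while if c = 0 then u is bounded and periodic in x with period 1 in each coordinate. -/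
open Real

/- ### Auxiliary lemmas -/

noncomputable def pr (k : Fin 3) : (Fin 3 → ℝ) →L[ℝ] ℝ := ContinuousLinearMap.proj k

lemma hS (k : Fin 3) (s : ℝ) (x : Fin 3 → ℝ) :
    HasFDerivAt (fun y : Fin 3 → ℝ => Real.sin (2*π*(y k + s)))
      ((2*π*Real.cos (2*π*(x k + s))) • pr k) x := by
  have h1 : HasFDerivAt (fun y : Fin 3 → ℝ => 2*π*(y k + s)) ((2*π) • pr k) x :=
    ((pr k).hasFDerivAt.add_const s).const_mul (2*π)
  have := (Real.hasDerivAt_sin (2*π*(x k + s))).comp_hasFDerivAt x h1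
  refine this.congr_fderiv ?_
  ext y
  simp [smul_smul, mul_comm]

lemma hC (k : Fin 3) (s : ℝ) (x : Fin 3 → ℝ) :
    HasFDerivAt (fun y : Fin 3 → ℝ => Real.cos (2*π*(y k + s)))
      ((-(2*π*Real.sin (2*π*(x k + s)))) • pr k) x := by
  have h1 : HasFDerivAt (fun y : Fin 3 → ℝ => 2*π*(y k + s)) ((2*π) • pr k) x :=
    ((pr k).hasFDerivAt.add_const s).const_mul (2*π)
  have := (Real.hasDerivAt_cos (2*π*(x k + s))).comp_hasFDerivAt x h1
  refine this.congr_fderiv ?_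
  ext y
  simp [smul_smul, mul_comm]

lemma hU (E s ct : ℝ) (a b : Fin 3) (x : Fin 3 → ℝ) :
    HasFDerivAt (fun y : Fin 3 → ℝ =>
        E * (Real.sin (2*π*(y a + s)) + Real.cos (2*π*(y b + s))) - ct)
      (E • ((2*π*Real.cos (2*π*(x a + s))) • pr a
          + (-(2*π*Real.sin (2*π*(x b + s)))) • pr b)) x :=
  (((hS a s x).add (hC b s x)).const_mul E).sub_const ct

lemma pdU (E s ct : ℝ) (a b : Fin 3) (j : Fin 3) (x : Fin 3 → ℝ) :
    pd (fun y => E * (Real.sin (2*π*(y a + s)) + Real.cos (2*π*(y b + s))) - ct) j x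
    = E * ((2*π*Real.cos (2*π*(x a + s))) * (if a = j then 1 else 0)
         + (-(2*π*Real.sin (2*π*(x b + s)))) * (if b = j then 1 else 0)) := by
  rw [pd, (hU E s ct a b x).fderiv]
  simp only [ContinuousLinearMap.smul_apply, ContinuousLinearMap.add_apply, smul_eq_mul, pr,
    ContinuousLinearMap.proj_apply, Pi.single_apply]
  all_goals split_ifs <;> ring

lemma pdCS (A B s : ℝ) (a b : Fin 3) (j : Fin 3) (x : Fin 3 → ℝ) :
    pd (fun y => A * Real.cos (2*π*(y a + s)) + B * Real.sin (2*π*(y b + s))) j x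
    = A * (-(2*π*Real.sin (2*π*(x a + s)))) * (if a = j then 1 else 0)
    + B * (2*π*Real.cos (2*π*(x b + s))) * (if b = j then 1 else 0) := by
  rw [pd, show (fun y : Fin 3 → ℝ => A * Real.cos (2*π*(y a + s)) + B * Real.sin (2*π*(y b + s)))
      = (fun y => A * Real.cos (2*π*(y a + s))) + (fun y => B * Real.sin (2*π*(y b + s))) from rfl,
    (((hC a s x).const_mul A).add ((hS b s x).const_mul B)).fderiv]
  simp only [ContinuousLinearMap.smul_apply, ContinuousLinearMap.add_apply, smul_eq_mul, pr,
    ContinuousLinearMap.proj_apply, Pi.single_apply]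
  all_goals split_ifs <;> ring

lemma lapU (E s ct : ℝ) (a b : Fin 3) (hab : a ≠ b) (x : Fin 3 → ℝ) :
    lap (fun y => E * (Real.sin (2*π*(y a + s)) + Real.cos (2*π*(y b + s))) - ct) x
    = -((2*π)^2 * E * (Real.sin (2*π*(x a + s)) + Real.cos (2*π*(x b + s)))) := by
  have h1 : ∀ j : Fin 3,
      pd (fun y => E * (Real.sin (2*π*(y a + s)) + Real.cos (2*π*(y b + s))) - ct) j
      = fun x => (E * (if a = j then 1 else 0) * (2*π)) * Real.cos (2*π*(x a + s))
          + (-(E * (if b = j then 1 else 0) * (2*π))) * Real.sin (2*π*(x b + s)) := by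
    intro j; funext x
    rw [pdU]; ring
  simp only [lap, Fin.sum_univ_three, h1, pdCS]
  fin_cases a <;> fin_cases b <;> simp_all <;> ring

lemma hLin (cc : ℝ) (x : Fin 3 → ℝ) :
    HasFDerivAt (fun y : Fin 3 → ℝ => cc * (y 0 + y 1 + y 2))
      (cc • (pr 0 + pr 1 + pr 2)) x :=
  ((((pr 0).hasFDerivAt.add (pr 1).hasFDerivAt).add (pr 2).hasFDerivAt).const_mul cc)

lemma hP (K cc s : ℝ) (x : Fin 3 → ℝ) :
    HasFDerivAt (fun y : Fin 3 → ℝ =>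
      K * (Real.sin (2*π*(y 0 + s)) * Real.cos (2*π*(y 1 + s)) +
           Real.sin (2*π*(y 1 + s)) * Real.cos (2*π*(y 2 + s)) +
           Real.sin (2*π*(y 2 + s)) * Real.cos (2*π*(y 0 + s))) + cc * (y 0 + y 1 + y 2))
      (K • ((Real.sin (2*π*(x 0 + s)) • ((-(2*π*Real.sin (2*π*(x 1 + s)))) • pr 1)
              + Real.cos (2*π*(x 1 + s)) • ((2*π*Real.cos (2*π*(x 0 + s))) • pr 0))
          + (Real.sin (2*π*(x 1 + s)) • ((-(2*π*Real.sin (2*π*(x 2 + s)))) • pr 2)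
              + Real.cos (2*π*(x 2 + s)) • ((2*π*Real.cos (2*π*(x 1 + s))) • pr 1))
          + (Real.sin (2*π*(x 2 + s)) • ((-(2*π*Real.sin (2*π*(x 0 + s)))) • pr 0)
              + Real.cos (2*π*(x 0 + s)) • ((2*π*Real.cos (2*π*(x 2 + s))) • pr 2)))
        + cc • (pr 0 + pr 1 + pr 2)) x :=
  (((((hS 0 s x).mul (hC 1 s x)).add ((hS 1 s x).mul (hC 2 s x))).add
      ((hS 2 s x).mul (hC 0 s x))).const_mul K).add (hLin cc x)

lemma pdP (K cc s : ℝ) (j : Fin 3) (x : Fin 3 → ℝ) :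
    pd (fun y =>
      K * (Real.sin (2*π*(y 0 + s)) * Real.cos (2*π*(y 1 + s)) +
           Real.sin (2*π*(y 1 + s)) * Real.cos (2*π*(y 2 + s)) +
           Real.sin (2*π*(y 2 + s)) * Real.cos (2*π*(y 0 + s))) + cc * (y 0 + y 1 + y 2)) j x
    = K * ((Real.sin (2*π*(x 0 + s)) * (-(2*π*Real.sin (2*π*(x 1 + s)))) * (if (1:Fin 3) = j then 1 else 0)
              + Real.cos (2*π*(x 1 + s)) * (2*π*Real.cos (2*π*(x 0 + s))) * (if (0:Fin 3) = j then 1 else 0))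
          + (Real.sin (2*π*(x 1 + s)) * (-(2*π*Real.sin (2*π*(x 2 + s)))) * (if (2:Fin 3) = j then 1 else 0)
              + Real.cos (2*π*(x 2 + s)) * (2*π*Real.cos (2*π*(x 1 + s))) * (if (1:Fin 3) = j then 1 else 0))
          + (Real.sin (2*π*(x 2 + s)) * (-(2*π*Real.sin (2*π*(x 0 + s)))) * (if (0:Fin 3) = j then 1 else 0)
              + Real.cos (2*π*(x 0 + s)) * (2*π*Real.cos (2*π*(x 2 + s))) * (if (2:Fin 3) = j then 1 else 0)))
      + cc * ((if (0:Fin 3) = j then 1 else 0) + (if (1:Fin 3) = j then 1 else 0) + (if (2:Fin 3) = j then 1 else 0)) := by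
  rw [pd, (hP K cc s x).fderiv]
  simp only [ContinuousLinearMap.smul_apply, ContinuousLinearMap.add_apply, smul_eq_mul, pr,
    ContinuousLinearMap.proj_apply, Pi.single_apply]
  all_goals split_ifs <;> ring

lemma hT (β c a b : ℝ) (t : ℝ) :
    HasDerivAt (fun t => Real.exp (-β*t) * (2*π) *
        (Real.sin (2*π*(a + c*t^2/2)) + Real.cos (2*π*(b + c*t^2/2))) - c*t)
      (Real.exp (-β*t) * (-β) * (2*π) *
        (Real.sin (2*π*(a + c*t^2/2)) + Real.cos (2*π*(b + c*t^2/2)))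
       + Real.exp (-β*t) * (2*π) *
        (Real.cos (2*π*(a + c*t^2/2)) * (2*π*(c*t))
          + (-Real.sin (2*π*(b + c*t^2/2))) * (2*π*(c*t))) - c) t := by
  have hlin : HasDerivAt (fun t : ℝ => -β * t) (-β) t := by
    simpa using (hasDerivAt_id t).const_mul (-β)
  have hexp : HasDerivAt (fun t : ℝ => Real.exp (-β*t)) (Real.exp (-β*t) * (-β)) t :=
    (Real.hasDerivAt_exp (-β*t)).comp t hlin
  have hin : ∀ a : ℝ, HasDerivAt (fun t : ℝ => 2*π*(a + c*t^2/2)) (2*π*(c*t)) t := by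
    intro a
    have h2 : HasDerivAt (fun t : ℝ => a + c*t^2/2) (c*t) t := by
      have := (((hasDerivAt_pow 2 t).const_mul c).div_const 2).const_add a
      refine this.congr_deriv ?_; push_cast; norm_num; ring
    simpa using h2.const_mul (2*π)
  have hsin := (Real.hasDerivAt_sin (2*π*(a + c*t^2/2))).comp t (hin a)
  have hcos := (Real.hasDerivAt_cos (2*π*(b + c*t^2/2))).comp t (hin b)
  have hct : HasDerivAt (fun t : ℝ => c * t) c t := by
    simpa using (hasDerivAt_id t).const_mul c
  have := ((hexp.mul_const (2*π)).mul (hsin.add hcos)).sub hct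
  refine this.congr_deriv ?_
  simp only [Pi.add_apply, Function.comp_apply]

lemma tdU (β c a b t : ℝ) (ht : 0 ≤ t) :
    td (fun t => Real.exp (-β*t) * (2*π) *
        (Real.sin (2*π*(a + c*t^2/2)) + Real.cos (2*π*(b + c*t^2/2))) - c*t) t
    = Real.exp (-β*t) * (-β) * (2*π) *
        (Real.sin (2*π*(a + c*t^2/2)) + Real.cos (2*π*(b + c*t^2/2)))
       + Real.exp (-β*t) * (2*π) *
        (Real.cos (2*π*(a + c*t^2/2)) * (2*π*(c*t))
          + (-Real.sin (2*π*(b + c*t^2/2))) * (2*π*(c*t))) - c := by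
  rw [td]
  exact ((hT β c a b t).hasDerivWithinAt).derivWithin (uniqueDiffOn_Ici 0 t ht)

lemma absUpper (β t : ℝ) (hβnn : 0 ≤ β) (ht : 0 ≤ t) (θ₁ θ₂ : ℝ) :
    |Real.exp (-β*t) * (2*π) * (Real.sin θ₁ + Real.cos θ₂)| ≤ 4*π := by
  rw [abs_mul, abs_mul]
  have e1 : Real.exp (-β*t) ≤ 1 := Real.exp_le_one_iff.2 (by nlinarith)
  have e2 : |Real.sin θ₁ + Real.cos θ₂| ≤ 2 := by
    have h := abs_add_le (Real.sin θ₁) (Real.cos θ₂)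
    have h1 : |Real.sin θ₁| ≤ 1 := Real.abs_sin_le_one θ₁
    have h2 : |Real.cos θ₂| ≤ 1 := Real.abs_cos_le_one θ₂
    linarith
  have e3 : |Real.exp (-β*t)| = Real.exp (-β*t) := abs_of_pos (Real.exp_pos _)
  have e4 : |2*π| = 2*π := abs_of_pos (by positivity)
  rw [e3, e4]
  have h5 : Real.exp (-β*t) * (2*π) ≤ 1 * (2*π) :=
    mul_le_mul_of_nonneg_right e1 (by positivity)
  have h6 : Real.exp (-β*t) * (2*π) * |Real.sin θ₁ + Real.cos θ₂| ≤ (1 * (2*π)) * 2 :=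
    mul_le_mul h5 e2 (abs_nonneg _) (by positivity)
  linarith

lemma periodKey (a d : ℝ) (hd : d = 0 ∨ d = 1) :
    Real.sin (2*π*(a + d)) = Real.sin (2*π*a) ∧
    Real.cos (2*π*(a + d)) = Real.cos (2*π*a) := by
  rcases hd with hd | hd <;> subst hd
  · norm_num
  · rw [show 2*π*(a+1) = 2*π*a + 2*π by ring]
    exact ⟨Real.sin_add_two_pi _, Real.cos_add_two_pi _⟩

lemma absLower (β c t M : ℝ) (hβnn : 0 ≤ β) (ht : 0 ≤ t) (θ : ℝ)
    (h : |Real.exp (-β*t) * (2*π) * (Real.sin θ + Real.cos θ) - c*t| ≤ M) :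
    |c| * t ≤ M + 4*π := by
  have h1 := absUpper β t hβnn ht θ θ
  have h2 : |c*t| - |Real.exp (-β*t) * (2*π) * (Real.sin θ + Real.cos θ)| ≤
      |Real.exp (-β*t) * (2*π) * (Real.sin θ + Real.cos θ) - c*t| := by
    rw [abs_sub_comm]
    exact abs_sub_abs_le_abs_sub _ _
  have h3 : |c*t| = |c| * t := by rw [abs_mul, abs_of_nonneg ht]
  linarith

lemma cdU (β c : ℝ) (a b : Fin 3) :
    ContDiff ℝ (⊤:ℕ∞) (fun q : (Fin 3 → ℝ) × ℝ =>
      Real.exp (-β * q.2) * (2 * π) *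
        (Real.sin (2 * π * (q.1 a + c * q.2 ^ 2 / 2)) +
         Real.cos (2 * π * (q.1 b + c * q.2 ^ 2 / 2))) - c * q.2) := by
  have h1 : ContDiff ℝ (⊤:ℕ∞) fun q : (Fin 3→ℝ)×ℝ => q.2 := contDiff_snd
  have hk : ∀ k : Fin 3, ContDiff ℝ (⊤:ℕ∞) fun q : (Fin 3→ℝ)×ℝ => q.1 k :=
    fun k => (contDiff_pi.1 contDiff_id k).comp contDiff_fst
  have harg : ∀ k, ContDiff ℝ (⊤:ℕ∞) fun q : (Fin 3→ℝ)×ℝ => 2*π*(q.1 k + c*q.2^2/2) :=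
    fun k => contDiff_const.mul ((hk k).add ((contDiff_const.mul (h1.pow 2)).div_const 2))
  have hs := fun k => Real.contDiff_sin.comp (harg k)
  have hc := fun k => Real.contDiff_cos.comp (harg k)
  have he : ContDiff ℝ (⊤:ℕ∞) fun q : (Fin 3→ℝ)×ℝ => Real.exp (-β*q.2) :=
    Real.contDiff_exp.comp (contDiff_const.mul h1)
  exact ((he.mul contDiff_const).mul ((hs a).add (hc b))).sub (contDiff_const.mul h1)

lemma cdP (β c : ℝ) :
    ContDiff ℝ (⊤:ℕ∞) (fun q : (Fin 3 → ℝ) × ℝ =>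
      -(Real.exp (-(2 * β) * q.2)) * (2 * π) ^ 2 *
        (Real.sin (2 * π * (q.1 0 + c * q.2 ^ 2 / 2)) *
           Real.cos (2 * π * (q.1 1 + c * q.2 ^ 2 / 2)) +
         Real.sin (2 * π * (q.1 1 + c * q.2 ^ 2 / 2)) *
           Real.cos (2 * π * (q.1 2 + c * q.2 ^ 2 / 2)) +
         Real.sin (2 * π * (q.1 2 + c * q.2 ^ 2 / 2)) *
           Real.cos (2 * π * (q.1 0 + c * q.2 ^ 2 / 2))) +
      c * (q.1 0 + q.1 1 + q.1 2)) := by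
  have h1 : ContDiff ℝ (⊤:ℕ∞) fun q : (Fin 3→ℝ)×ℝ => q.2 := contDiff_snd
  have hk : ∀ k : Fin 3, ContDiff ℝ (⊤:ℕ∞) fun q : (Fin 3→ℝ)×ℝ => q.1 k :=
    fun k => (contDiff_pi.1 contDiff_id k).comp contDiff_fst
  have harg : ∀ k, ContDiff ℝ (⊤:ℕ∞) fun q : (Fin 3→ℝ)×ℝ => 2*π*(q.1 k + c*q.2^2/2) :=
    fun k => contDiff_const.mul ((hk k).add ((contDiff_const.mul (h1.pow 2)).div_const 2))
  have hs := fun k => Real.contDiff_sin.comp (harg k)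
  have hc := fun k => Real.contDiff_cos.comp (harg k)
  have he : ContDiff ℝ (⊤:ℕ∞) fun q : (Fin 3→ℝ)×ℝ => -(Real.exp (-(2*β)*q.2)) :=
    (Real.contDiff_exp.comp (contDiff_const.mul h1)).neg
  exact (((he.mul contDiff_const).mul
      ((((hs 0).mul (hc 1)).add ((hs 1).mul (hc 2))).add ((hs 2).mul (hc 0)))).add
    (contDiff_const.mul (((hk 0).add (hk 1)).add (hk 2))))

lemma addLower (A v M B : ℝ) (hA : |A| ≤ B) (h : |A + v| ≤ M) : |v| ≤ M + B := by
  have h1 : |v| ≤ |A + v| + |A| := by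
    have h2 := abs_add_le (A + v) (-A)
    rw [show A + v + -A = v by ring, abs_neg] at h2
    linarith
  linarith

/-- Lemma 1 specialized to `g(t) = ct²/2`: for every `c` the pair `(u,p)` is a
smooth solution of Navier–Stokes with zero force and the given periodic initial
data; for `c ≠ 0` velocity and pressure are unbounded, for `c = 0` the velocity
is bounded and 1-periodic in space. -/
theorem stmt13 (ν : ℝ) (hν : 0 < ν) (c : ℝ)
    (β : ℝ) (hβ : β = (2 * π) ^ 2 * ν)
    (u : Fin 3 → (Fin 3 → ℝ) → ℝ → ℝ) (p : (Fin 3 → ℝ) → ℝ → ℝ)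
    (hu0 : ∀ x t, u 0 x t =
      Real.exp (-β * t) * (2 * π) *
        (Real.sin (2 * π * (x 1 + c * t ^ 2 / 2)) +
         Real.cos (2 * π * (x 2 + c * t ^ 2 / 2))) - c * t)
    (hu1 : ∀ x t, u 1 x t =
      Real.exp (-β * t) * (2 * π) *
        (Real.sin (2 * π * (x 2 + c * t ^ 2 / 2)) +
         Real.cos (2 * π * (x 0 + c * t ^ 2 / 2))) - c * t)
    (hu2 : ∀ x t, u 2 x t =
      Real.exp (-β * t) * (2 * π) *
        (Real.sin (2 * π * (x 0 + c * t ^ 2 / 2)) +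
         Real.cos (2 * π * (x 1 + c * t ^ 2 / 2))) - c * t)
    (hp : ∀ x t, p x t =
      -(Real.exp (-(2 * β) * t)) * (2 * π) ^ 2 *
        (Real.sin (2 * π * (x 0 + c * t ^ 2 / 2)) *
           Real.cos (2 * π * (x 1 + c * t ^ 2 / 2)) +
         Real.sin (2 * π * (x 1 + c * t ^ 2 / 2)) *
           Real.cos (2 * π * (x 2 + c * t ^ 2 / 2)) +
         Real.sin (2 * π * (x 2 + c * t ^ 2 / 2)) *
           Real.cos (2 * π * (x 0 + c * t ^ 2 / 2))) +
      c * (x 0 + x 1 + x 2)) :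
    -- smoothness on ℝ³ × [0,∞)
    (∀ i : Fin 3, ContDiffOn ℝ (⊤ : ℕ∞)
      (fun q : (Fin 3 → ℝ) × ℝ => u i q.1 q.2) (Set.univ ×ˢ Set.Ici 0)) ∧
    ContDiffOn ℝ (⊤ : ℕ∞)
      (fun q : (Fin 3 → ℝ) × ℝ => p q.1 q.2) (Set.univ ×ˢ Set.Ici 0) ∧
    -- Navier–Stokes with zero external force
    (∀ x : Fin 3 → ℝ, ∀ t : ℝ, 0 ≤ t → ∀ i : Fin 3,
      td (u i x) t + ∑ j : Fin 3, u j x t * pd (fun y => u i y t) j x =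
        ν * lap (fun y => u i y t) x - pd (fun y => p y t) i x) ∧
    -- divergence-free
    (∀ x : Fin 3 → ℝ, ∀ t : ℝ, 0 ≤ t →
      ∑ i : Fin 3, pd (fun y => u i y t) i x = 0) ∧
    -- initial condition
    (∀ x : Fin 3 → ℝ,
      u 0 x 0 = 2 * π * Real.sin (2 * π * x 1) + 2 * π * Real.cos (2 * π * x 2) ∧
      u 1 x 0 = 2 * π * Real.sin (2 * π * x 2) + 2 * π * Real.cos (2 * π * x 0) ∧
      u 2 x 0 = 2 * π * Real.sin (2 * π * x 0) + 2 * π * Real.cos (2 * π * x 1)) ∧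
    -- if c ≠ 0, every velocity component and the pressure are unbounded
    (c ≠ 0 →
      (∀ i : Fin 3, ¬(∃ M : ℝ, ∀ x : Fin 3 → ℝ, ∀ t : ℝ, 0 ≤ t → |u i x t| ≤ M)) ∧
      ¬(∃ M : ℝ, ∀ x : Fin 3 → ℝ, ∀ t : ℝ, 0 ≤ t → |p x t| ≤ M)) ∧
    -- if c = 0, the velocity is bounded and 1-periodic in space
    (c = 0 →
      (∃ M : ℝ, ∀ i : Fin 3, ∀ x : Fin 3 → ℝ, ∀ t : ℝ, 0 ≤ t → |u i x t| ≤ M) ∧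
      (∀ i : Fin 3, ∀ x : Fin 3 → ℝ, ∀ t : ℝ, 0 ≤ t → ∀ j : Fin 3,
        u i (x + Pi.single j 1) t = u i x t)) := by
  
  have hβnn : 0 ≤ β := by rw [hβ]; positivity
  refine ⟨?_, ?_, ?_, ?_, ?_, ?_, ?_⟩
  · -- smoothness of u
    intro i
    match i with
    | 0 =>
      rw [show (fun q : (Fin 3 → ℝ) × ℝ => u 0 q.1 q.2) = fun q =>
        Real.exp (-β * q.2) * (2 * π) *
          (Real.sin (2 * π * (q.1 1 + c * q.2 ^ 2 / 2)) +
           Real.cos (2 * π * (q.1 2 + c * q.2 ^ 2 / 2))) - c * q.2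
        from funext fun q => hu0 q.1 q.2]
      exact (cdU β c 1 2).contDiffOn
    | 1 =>
      rw [show (fun q : (Fin 3 → ℝ) × ℝ => u 1 q.1 q.2) = fun q =>
        Real.exp (-β * q.2) * (2 * π) *
          (Real.sin (2 * π * (q.1 2 + c * q.2 ^ 2 / 2)) +
           Real.cos (2 * π * (q.1 0 + c * q.2 ^ 2 / 2))) - c * q.2
        from funext fun q => hu1 q.1 q.2]
      exact (cdU β c 2 0).contDiffOn
    | 2 =>
      rw [show (fun q : (Fin 3 → ℝ) × ℝ => u 2 q.1 q.2) = fun q =>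
        Real.exp (-β * q.2) * (2 * π) *
          (Real.sin (2 * π * (q.1 0 + c * q.2 ^ 2 / 2)) +
           Real.cos (2 * π * (q.1 1 + c * q.2 ^ 2 / 2))) - c * q.2
        from funext fun q => hu2 q.1 q.2]
      exact (cdU β c 0 1).contDiffOn
  · -- smoothness of p
    rw [show (fun q : (Fin 3 → ℝ) × ℝ => p q.1 q.2) = fun q : (Fin 3 → ℝ) × ℝ =>
        -(Real.exp (-(2 * β) * q.2)) * (2 * π) ^ 2 *
          (Real.sin (2 * π * (q.1 0 + c * q.2 ^ 2 / 2)) *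
             Real.cos (2 * π * (q.1 1 + c * q.2 ^ 2 / 2)) +
           Real.sin (2 * π * (q.1 1 + c * q.2 ^ 2 / 2)) *
             Real.cos (2 * π * (q.1 2 + c * q.2 ^ 2 / 2)) +
           Real.sin (2 * π * (q.1 2 + c * q.2 ^ 2 / 2)) *
             Real.cos (2 * π * (q.1 0 + c * q.2 ^ 2 / 2))) +
        c * (q.1 0 + q.1 1 + q.1 2)
        from funext fun q => hp q.1 q.2]
    exact (cdP β c).contDiffOn
  · -- Navier–Stokes
    intro x t ht i
    have hexp2 : Real.exp (-(2*β)*t) = Real.exp (-β*t) * Real.exp (-β*t) := by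
      rw [← Real.exp_add]; ring_nf
    match i with
    | 0 =>
      have hx : u 0 x = fun t => Real.exp (-β*t) * (2*π) *
          (Real.sin (2*π*(x 1 + c*t^2/2)) + Real.cos (2*π*(x 2 + c*t^2/2))) - c*t :=
        funext fun t => hu0 x t
      rw [Fin.sum_univ_three]
      simp only [hx, hu0, hu1, hu2, hp]
      rw [tdU β c (x 1) (x 2) t ht,
        lapU (Real.exp (-β*t) * (2*π)) (c*t^2/2) (c*t) 1 2 (by decide) x]
      simp only [pdU, pdP, Fin.reduceEq, ite_true, ite_false]
      rw [hexp2, hβ]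
      ring
    | 1 =>
      have hx : u 1 x = fun t => Real.exp (-β*t) * (2*π) *
          (Real.sin (2*π*(x 2 + c*t^2/2)) + Real.cos (2*π*(x 0 + c*t^2/2))) - c*t :=
        funext fun t => hu1 x t
      rw [Fin.sum_univ_three]
      simp only [hx, hu0, hu1, hu2, hp]
      rw [tdU β c (x 2) (x 0) t ht,
        lapU (Real.exp (-β*t) * (2*π)) (c*t^2/2) (c*t) 2 0 (by decide) x]
      simp only [pdU, pdP, Fin.reduceEq, ite_true, ite_false]
      rw [hexp2, hβ]
      ring
    | 2 =>
      have hx : u 2 x = fun t => Real.exp (-β*t) * (2*π) *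
          (Real.sin (2*π*(x 0 + c*t^2/2)) + Real.cos (2*π*(x 1 + c*t^2/2))) - c*t :=
        funext fun t => hu2 x t
      rw [Fin.sum_univ_three]
      simp only [hx, hu0, hu1, hu2, hp]
      rw [tdU β c (x 0) (x 1) t ht,
        lapU (Real.exp (-β*t) * (2*π)) (c*t^2/2) (c*t) 0 1 (by decide) x]
      simp only [pdU, pdP, Fin.reduceEq, ite_true, ite_false]
      rw [hexp2, hβ]
      ring
  · -- divergence-free
    intro x t ht
    rw [Fin.sum_univ_three]
    simp only [hu0, hu1, hu2, pdU, Fin.reduceEq, ite_true, ite_false]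
    ring
  · -- initial condition
    intro x
    refine ⟨?_, ?_, ?_⟩
    · rw [hu0]; norm_num; ring
    · rw [hu1]; norm_num; ring
    · rw [hu2]; norm_num; ring
  · -- unboundedness for c ≠ 0
    intro hc
    have hc' : 0 < |c| := abs_pos.2 hc
    constructor
    · intro i h
      obtain ⟨M, h⟩ := h
      set t0 : ℝ := (|M| + 4*π + 1)/|c| with ht0def
      have ht0 : 0 ≤ t0 := by positivity
      have heq : |c| * t0 = |M| + 4*π + 1 := by
        rw [ht0def, mul_comm, div_mul_cancel₀ _ (ne_of_gt hc')]
      have hM : M ≤ |M| := le_abs_self M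
      match i with
      | 0 =>
        have hb := h (fun _ => 0) t0 ht0
        rw [hu0] at hb
        have := absLower β c t0 M hβnn ht0 _ hb
        linarith
      | 1 =>
        have hb := h (fun _ => 0) t0 ht0
        rw [hu1] at hb
        have := absLower β c t0 M hβnn ht0 _ hb
        linarith
      | 2 =>
        have hb := h (fun _ => 0) t0 ht0
        rw [hu2] at hb
        have := absLower β c t0 M hβnn ht0 _ hb
        linarith
    · intro h
      obtain ⟨M, h⟩ := h
      set r : ℝ := (|M| + 3*(2*π)^2 + 1)/|c| with hrdef
      have hb := h (Pi.single 0 r) 0 le_rfl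
      rw [hp] at hb
      have e0 : (Pi.single (0:Fin 3) r : Fin 3 → ℝ) 0 = r := by simp
      have e1 : (Pi.single (0:Fin 3) r : Fin 3 → ℝ) 1 = 0 := by rw [Pi.single_eq_of_ne]; decide
      have e2 : (Pi.single (0:Fin 3) r : Fin 3 → ℝ) 2 = 0 := by rw [Pi.single_eq_of_ne]; decide
      rw [e0, e1, e2] at hb
      have hA : |(-(Real.exp (-(2*β)*0)) * (2*π)^2 *
          (Real.sin (2*π*(r + c*0^2/2)) * Real.cos (2*π*(0 + c*0^2/2)) +
           Real.sin (2*π*(0 + c*0^2/2)) * Real.cos (2*π*(0 + c*0^2/2)) +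
           Real.sin (2*π*(0 + c*0^2/2)) * Real.cos (2*π*(r + c*0^2/2))))| ≤ (2*π)^2 * 3 := by
        rw [abs_mul, abs_mul, abs_neg]
        have hE : |Real.exp (-(2*β)*0)| = 1 := by norm_num
        have hP2 : |(2*π)^2| = (2*π)^2 := abs_of_pos (by positivity)
        have hb1 : ∀ a b : ℝ, |Real.sin a * Real.cos b| ≤ 1 := by
          intro a b
          rw [abs_mul]
          exact mul_le_one₀ (Real.abs_sin_le_one a) (abs_nonneg _) (Real.abs_cos_le_one b)
        have hT : |Real.sin (2*π*(r + c*0^2/2)) * Real.cos (2*π*(0 + c*0^2/2)) +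
           Real.sin (2*π*(0 + c*0^2/2)) * Real.cos (2*π*(0 + c*0^2/2)) +
           Real.sin (2*π*(0 + c*0^2/2)) * Real.cos (2*π*(r + c*0^2/2))| ≤ 3 := by
          have t1 := abs_add_le (Real.sin (2*π*(r + c*0^2/2)) * Real.cos (2*π*(0 + c*0^2/2)) +
            Real.sin (2*π*(0 + c*0^2/2)) * Real.cos (2*π*(0 + c*0^2/2)))
            (Real.sin (2*π*(0 + c*0^2/2)) * Real.cos (2*π*(r + c*0^2/2)))
          have t2 := abs_add_le (Real.sin (2*π*(r + c*0^2/2)) * Real.cos (2*π*(0 + c*0^2/2)))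
            (Real.sin (2*π*(0 + c*0^2/2)) * Real.cos (2*π*(0 + c*0^2/2)))
          have := hb1 (2*π*(r + c*0^2/2)) (2*π*(0 + c*0^2/2))
          have := hb1 (2*π*(0 + c*0^2/2)) (2*π*(0 + c*0^2/2))
          have := hb1 (2*π*(0 + c*0^2/2)) (2*π*(r + c*0^2/2))
          linarith
        rw [hE, hP2]
        nlinarith [sq_nonneg (2*π), Real.pi_pos]
      have hlow := addLower _ _ _ _ hA hb
      have hvr : |c * (r + 0 + 0)| = |c| * r := by
        rw [add_zero, add_zero, abs_mul, abs_of_nonneg (by positivity : (0:ℝ) ≤ r)]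
      rw [hvr] at hlow
      have heq : |c| * r = |M| + 3*(2*π)^2 + 1 := by
        rw [hrdef, mul_comm, div_mul_cancel₀ _ (ne_of_gt hc')]
      have hM : M ≤ |M| := le_abs_self M
      nlinarith [sq_nonneg (2*π)]
  · -- c = 0 case
    intro hc
    subst hc
    constructor
    · refine ⟨4*π, fun i x t ht => ?_⟩
      match i with
      | 0 =>
        rw [hu0]
        simp only [zero_mul, sub_zero]
        exact absUpper β t hβnn ht _ _
      | 1 =>
        rw [hu1]
        simp only [zero_mul, sub_zero]
        exact absUpper β t hβnn ht _ _
      | 2 =>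
        rw [hu2]
        simp only [zero_mul, sub_zero]
        exact absUpper β t hβnn ht _ _
    · intro i x t ht j
      have hsk : ∀ k : Fin 3, Real.sin (2*π*(x k + (Pi.single j 1 : Fin 3 → ℝ) k)) = Real.sin (2*π*(x k)) := by
        intro k
        refine (periodKey (x k) _ ?_).1
        rcases eq_or_ne k j with h | h
        · subst h; exact Or.inr (by simp)
        · exact Or.inl (by rw [Pi.single_eq_of_ne h])
      have hck : ∀ k : Fin 3, Real.cos (2*π*(x k + (Pi.single j 1 : Fin 3 → ℝ) k)) = Real.cos (2*π*(x k)) := by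
        intro k
        refine (periodKey (x k) _ ?_).2
        rcases eq_or_ne k j with h | h
        · subst h; exact Or.inr (by simp)
        · exact Or.inl (by rw [Pi.single_eq_of_ne h])
      match i with
      | 0 =>
        rw [hu0, hu0]
        norm_num [hsk, hck]
      | 1 =>
        rw [hu1, hu1]
        norm_num [hsk, hck]
      | 2 =>
        rw [hu2, hu2]
        norm_num [hsk, hck]
end
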